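/- arXiv:2510.16807 — 3 statements merged into one kernel-verified Lean document; each statement's English description precedes it below -/
import Mathlib

section
/- There exist real scalars t₁ and t₂, not depending on the index i, such that for every 1 ≤ i ≤ d: E[X (Yᵀ)_{:,i} Y_{i,:} Xᵀ] = t₁ I_d and E[X (Yᵀ)_{:,i} (Ŵ_D)_{i,:}] = t₂ I_d. -/
open MeasureTheory ProbabilityTheory Matrix
open scoped NNReal

noncomputable section

namespace Stmt4Aux

/-! ### Auxiliary measurability lemmas -/

/-- Measurability of the determinant of a measurably-varying matrix. -/
lemma measurable_det' {α m : Type*} [MeasurableSpace α] [Fintype m] [DecidableEq m]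
    {M : α → Matrix m m ℝ} (h : ∀ i j, Measurable fun a => M a i j) :
    Measurable fun a => (M a).det := by
  simp_rw [Matrix.det_apply']
  exact Finset.measurable_sum _ fun σ _ =>
    (Finset.measurable_prod _ fun i _ => h _ _).const_mul _

/-- Measurability of the entries of the (nonsingular) inverse. -/
lemma measurable_inv_entry {α m : Type*} [MeasurableSpace α] [Fintype m] [DecidableEq m]
    {M : α → Matrix m m ℝ} (h : ∀ i j, Measurable fun a => M a i j) (i j : m) :
    Measurable fun a => (M a)⁻¹ i j := by
  simp_rw [Matrix.inv_def, Matrix.smul_apply, Ring.inverse_eq_inv', smul_eq_mul,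
    Matrix.adjugate_apply]
  refine (measurable_det' h).inv.mul (measurable_det' fun a b => ?_)
  rcases eq_or_ne a j with rfl | hne
  · simp [Matrix.updateRow_apply]
  · simp only [Matrix.updateRow_apply, if_neg hne]
    exact h a b

/-! ### Algebraic lemmas -/

/-- Key algebraic identity: transforming `X ↦ G X`, `W ↦ W Gᵀ` with `G` orthogonal leaves
`Y` unchanged and multiplies the ridge estimator on the right by `Gᵀ`. -/
lemma alg {d n : ℕ} (σ : ℝ) (X : Matrix (Fin d) (Fin n) ℝ) (W : Matrix (Fin d) (Fin d) ℝ)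
    (ε : Matrix (Fin d) (Fin n) ℝ) (G : Matrix (Fin d) (Fin d) ℝ)
    (h1 : G * Gᵀ = 1) (h2 : Gᵀ * G = 1) :
    (W * Gᵀ) * (G * X) + ε = W * X + ε ∧
    (W * X + ε) * (G * X)ᵀ * ((G * X) * (G * X)ᵀ + σ ^ 2 • 1)⁻¹ =
      (W * X + ε) * Xᵀ * (X * Xᵀ + σ ^ 2 • 1)⁻¹ * Gᵀ := by
  constructor
  · rw [Matrix.mul_assoc, ← Matrix.mul_assoc Gᵀ, h2, Matrix.one_mul]
  · have hXX : (G * X) * (G * X)ᵀ + σ ^ 2 • 1 = G * (X * Xᵀ + σ ^ 2 • 1) * Gᵀ := by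
      rw [Matrix.transpose_mul, Matrix.mul_add, Matrix.add_mul]
      congr 1
      · rw [Matrix.mul_assoc, Matrix.mul_assoc, Matrix.mul_assoc]
      · rw [Matrix.mul_smul, Matrix.smul_mul, Matrix.mul_one, h1]
    have hGi : G⁻¹ = Gᵀ := Matrix.inv_eq_right_inv h1
    have hGTi : (Gᵀ)⁻¹ = G := Matrix.inv_eq_right_inv h2
    rw [hXX, Matrix.mul_inv_rev, Matrix.mul_inv_rev, hGi, hGTi, Matrix.transpose_mul]
    simp only [Matrix.mul_assoc]
    rw [← Matrix.mul_assoc Gᵀ G, h2, Matrix.one_mul]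

lemma permMatrix_mulVec {d : ℕ} (τ : Equiv.Perm (Fin d)) (v : Fin d → ℝ) (r : Fin d) :
    ((τ.toPEquiv.toMatrix : Matrix (Fin d) (Fin d) ℝ) *ᵥ v) r = v (τ r) := by
  simp [Matrix.mulVec, dotProduct, PEquiv.toMatrix_apply, Equiv.toPEquiv_apply]

lemma permMatrix_orth {d : ℕ} (τ : Equiv.Perm (Fin d)) (hτ : τ.symm = τ) :
    ((τ.toPEquiv.toMatrix : Matrix (Fin d) (Fin d) ℝ))ᵀ = τ.toPEquiv.toMatrix ∧
    (τ.toPEquiv.toMatrix : Matrix (Fin d) (Fin d) ℝ) * τ.toPEquiv.toMatrix = 1 := by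
  have htr : τ.trans τ = Equiv.refl (Fin d) := by
    ext x
    nth_rewrite 2 [← hτ]
    simp
  constructor
  · rw [← PEquiv.toMatrix_symm, ← Equiv.toPEquiv_symm, hτ]
  · rw [← PEquiv.toMatrix_trans, ← Equiv.toPEquiv_trans, htr, Equiv.toPEquiv_refl,
      PEquiv.toMatrix_refl]

/-- Sign-flip diagonal matrix facts. -/
lemma flipMatrix {d : ℕ} (k : Fin d) :
    (Matrix.diagonal (fun r : Fin d => if r = k then (-1 : ℝ) else 1))ᵀ
        = Matrix.diagonal (fun r => if r = k then -1 else 1) ∧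
    Matrix.diagonal (fun r : Fin d => if r = k then (-1 : ℝ) else 1) *
        Matrix.diagonal (fun r => if r = k then -1 else 1) = 1 := by
  constructor
  · exact Matrix.diagonal_transpose _
  · rw [Matrix.diagonal_mul_diagonal]
    ext r c
    rcases eq_or_ne r c with rfl | hrc
    · by_cases h : r = k <;> simp [Matrix.diagonal_apply_eq, Matrix.one_apply_eq, h]
    · simp [Matrix.diagonal_apply_ne _ hrc, Matrix.one_apply_ne hrc]

/-! ### Measure-theoretic lemmas -/

/-- The joint law of finitely many independent real random variables is the product
of the marginal laws. -/
lemma map_eq_pi {Ω : Type} [MeasureSpace Ω] [IsProbabilityMeasure (ℙ : Measure Ω)]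
    {ι : Type*} [Fintype ι] (G : ι → Ω → ℝ) (hm : ∀ j, Measurable (G j))
    (hindep : iIndepFun G ℙ)
    (μs : ι → Measure ℝ) [∀ j, IsProbabilityMeasure (μs j)]
    (hlaw : ∀ j, Measure.map (G j) ℙ = μs j) :
    Measure.map (fun ω j => G j ω) ℙ = Measure.pi μs := by
  have hF : Measurable fun ω (j : ι) => G j ω := measurable_pi_lambda _ hm
  refine (Measure.pi_eq fun s hs => ?_).symm
  rw [Measure.map_apply hF (MeasurableSet.univ_pi hs)]
  have hpre : (fun ω (j : ι) => G j ω) ⁻¹' (Set.pi Set.univ s) = ⋂ j, G j ⁻¹' s j := by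
    ext ω; simp [Set.mem_univ_pi]
  rw [hpre, hindep.meas_iInter fun j => ⟨s j, hs j, rfl⟩]
  exact Finset.prod_congr rfl fun j _ => by
    rw [← hlaw j, Measure.map_apply (hm j) (hs j)]

/-- Integral invariance under a measure-preserving coordinate permutation of a product. -/
lemma integral_perm {ι : Type*} [Fintype ι] (μs : ι → Measure ℝ)
    [∀ j, IsProbabilityMeasure (μs j)] (e : ι ≃ ι) (he : ∀ j, μs (e j) = μs j)
    (g : (ι → ℝ) → ℝ) (hg : Measurable g) :
    ∫ x, g (fun j => x (e j)) ∂(Measure.pi μs) = ∫ x, g x ∂(Measure.pi μs) := by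
  have hmp := MeasureTheory.measurePreserving_piCongrLeft (α := fun _ : ι => ℝ) μs e.symm
  have hμ : (Measure.pi fun j => μs (e.symm j)) = Measure.pi μs := by
    congr 1; funext j
    have := he (e.symm j); rw [Equiv.apply_symm_apply] at this; exact this.symm
  rw [hμ] at hmp
  have hco : ∀ x : ι → ℝ, (MeasurableEquiv.piCongrLeft (fun _ : ι => ℝ) e.symm) x
      = fun j => x (e j) := by
    intro x
    funext j
    have h1 : (Equiv.piCongrLeft (fun _ : ι => ℝ) e.symm) x (e.symm (e j)) = x (e j) :=
      Equiv.piCongrLeft_apply_apply (fun _ : ι => ℝ) e.symm x (e j)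
    rw [Equiv.symm_apply_apply] at h1
    rw [MeasurableEquiv.coe_piCongrLeft]
    exact h1
  calc ∫ x, g (fun j => x (e j)) ∂(Measure.pi μs)
      = ∫ x, g ((MeasurableEquiv.piCongrLeft (fun _ : ι => ℝ) e.symm) x) ∂(Measure.pi μs) := by
        simp_rw [hco]
    _ = ∫ x, g x ∂(Measure.pi μs) := by
        conv_rhs => rw [← hmp.map_eq]
        exact (integral_map (MeasurableEquiv.measurable _).aemeasurable
          hg.aestronglyMeasurable).symm

/-- Integral invariance under coordinatewise sign flips of a product of symmetric measures. -/
lemma integral_flip {ι : Type*} [Fintype ι] (μs : ι → Measure ℝ)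
    [∀ j, IsProbabilityMeasure (μs j)] (hsym : ∀ j, (μs j).map (fun y => -y) = μs j)
    (s : ι → Prop) [DecidablePred s] (g : (ι → ℝ) → ℝ) (hg : Measurable g) :
    ∫ x, g (fun j => if s j then -x j else x j) ∂(Measure.pi μs)
      = ∫ x, g x ∂(Measure.pi μs) := by
  have hmp : MeasurePreserving (fun (x : ι → ℝ) j => if s j then -x j else x j)
      (Measure.pi μs) (Measure.pi μs) := by
    refine MeasureTheory.measurePreserving_pi μs μs
      (f := fun j (y : ℝ) => if s j then -y else y) fun j => ?_
    by_cases h : s j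
    · simpa [h] using (⟨measurable_neg, hsym j⟩ : MeasurePreserving (fun y : ℝ => -y) (μs j) (μs j))
    · simp only [h, if_false]; exact MeasurePreserving.id (μs j)
  conv_rhs => rw [← hmp.map_eq]
  exact (integral_map hmp.measurable.aemeasurable hg.aestronglyMeasurable).symm

/-- Symmetry of the centered Gaussian. -/
lemma gaussian_neg (v : ℝ≥0) : (gaussianReal 0 v).map (fun y => -y) = gaussianReal 0 v := by
  have h := gaussianReal_map_const_mul (μ := 0) (v := v) (-1)
  simp only [neg_one_mul, mul_zero] at h
  rw [h]
  congr 1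
  ext
  push_cast
  norm_num

/-! ### The reassembled matrices on the canonical product space -/

abbrev E (d n : ℕ) := ((Fin d × Fin n) ⊕ ((Fin d × Fin d) ⊕ (Fin d × Fin n))) → ℝ

variable {d n : ℕ}

def Xf (x : E d n) : Matrix (Fin d) (Fin n) ℝ := Matrix.of fun k a => x (.inl (k, a))
def Wf (x : E d n) : Matrix (Fin d) (Fin d) ℝ := Matrix.of fun r c => x (.inr (.inl (r, c)))
def εf (x : E d n) : Matrix (Fin d) (Fin n) ℝ := Matrix.of fun r a => x (.inr (.inr (r, a)))
def Yf (x : E d n) : Matrix (Fin d) (Fin n) ℝ := Wf x * Xf x + εf x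
def Hf (σ : ℝ) (x : E d n) : Matrix (Fin d) (Fin d) ℝ :=
  Yf x * (Xf x)ᵀ * (Xf x * (Xf x)ᵀ + σ ^ 2 • 1)⁻¹
def g1 (i k l : Fin d) (x : E d n) : ℝ := (Xf x *ᵥ Yf x i) k * (Xf x *ᵥ Yf x i) l
def g2 (σ : ℝ) (i k l : Fin d) (x : E d n) : ℝ := (Xf x *ᵥ Yf x i) k * Hf σ x i l

lemma measurable_Xf (k a) : Measurable fun x : E d n => Xf x k a := measurable_pi_apply _
lemma measurable_Wf (r c) : Measurable fun x : E d n => Wf x r c := measurable_pi_apply _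
lemma measurable_εf (r a) : Measurable fun x : E d n => εf x r a := measurable_pi_apply _

lemma measurable_Yf (r a) : Measurable fun x : E d n => Yf x r a := by
  have : (fun x : E d n => Yf x r a)
      = fun x => (∑ c, Wf x r c * Xf x c a) + εf x r a := by
    funext x; simp [Yf, Matrix.add_apply, Matrix.mul_apply]
  rw [this]
  exact (Finset.measurable_sum _ fun c _ =>
    (measurable_Wf r c).mul (measurable_Xf c a)).add (measurable_εf r a)

lemma measurable_XY (i k : Fin d) : Measurable fun x : E d n => (Xf x *ᵥ Yf x i) k := by
  have : (fun x : E d n => (Xf x *ᵥ Yf x i) k) = fun x => ∑ a, Xf x k a * Yf x i a := by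
    funext x; simp [Matrix.mulVec, dotProduct]
  rw [this]
  exact Finset.measurable_sum _ fun a _ => (measurable_Xf k a).mul (measurable_Yf i a)

lemma measurable_Hf (σ : ℝ) (i l : Fin d) : Measurable fun x : E d n => Hf σ x i l := by
  have hM : ∀ c c' : Fin d,
      Measurable fun x : E d n => (Xf x * (Xf x)ᵀ + σ ^ 2 • (1 : Matrix (Fin d) (Fin d) ℝ)) c c' := by
    intro c c'
    have : (fun x : E d n => (Xf x * (Xf x)ᵀ + σ ^ 2 • (1 : Matrix (Fin d) (Fin d) ℝ)) c c')
        = fun x => (∑ a, Xf x c a * Xf x c' a) + σ ^ 2 • (1 : Matrix (Fin d) (Fin d) ℝ) c c' := by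
      funext x; simp [Matrix.add_apply, Matrix.mul_apply, Matrix.transpose_apply]
    rw [this]
    exact (Finset.measurable_sum _ fun a _ =>
      (measurable_Xf c a).mul (measurable_Xf c' a)).add measurable_const
  have : (fun x : E d n => Hf σ x i l)
      = fun x => ∑ c, (∑ a, Yf x i a * Xf x c a) *
          ((Xf x * (Xf x)ᵀ + σ ^ 2 • (1 : Matrix (Fin d) (Fin d) ℝ))⁻¹) c l := by
    funext x
    simp [Hf, Matrix.mul_apply, Matrix.transpose_apply, Finset.sum_mul, Finset.mul_sum]
  rw [this]
  exact Finset.measurable_sum _ fun c _ =>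
    (Finset.measurable_sum _ fun a _ => (measurable_Yf i a).mul (measurable_Xf c a)).mul
      (measurable_inv_entry hM c l)

lemma measurable_g1 (i k l : Fin d) : Measurable (g1 (d := d) (n := n) i k l) :=
  (measurable_XY i k).mul (measurable_XY i l)

lemma measurable_g2 (σ : ℝ) (i k l : Fin d) : Measurable (g2 (d := d) (n := n) σ i k l) :=
  (measurable_XY i k).mul (measurable_Hf σ i l)

/-! ### The sign-flip transformation -/

def flipSet (d n : ℕ) (k₀ : Fin d) :
    ((Fin d × Fin n) ⊕ ((Fin d × Fin d) ⊕ (Fin d × Fin n))) → Prop :=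
  Sum.elim (fun q => q.1 = k₀) (Sum.elim (fun q => q.2 = k₀) fun _ => False)

instance (k₀ : Fin d) : DecidablePred (flipSet d n k₀) := fun j => by
  rcases j with q | q | q <;> dsimp [flipSet] <;> infer_instance

def Nflip (k₀ : Fin d) (x : E d n) : E d n := fun j => if flipSet d n k₀ j then -x j else x j

lemma flip_core (σ : ℝ) (k₀ : Fin d) (x : E d n) :
    (∀ i, Xf (Nflip k₀ x) *ᵥ Yf (Nflip k₀ x) i
        = fun r => (if r = k₀ then (-1 : ℝ) else 1) * (Xf x *ᵥ Yf x i) r) ∧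
    Hf σ (Nflip k₀ x) = Hf σ x * Matrix.diagonal (fun r => if r = k₀ then (-1 : ℝ) else 1) := by
  set D : Matrix (Fin d) (Fin d) ℝ := Matrix.diagonal (fun r => if r = k₀ then -1 else 1) with hD
  obtain ⟨hDt, hDD⟩ := flipMatrix (d := d) k₀
  have hXf : Xf (Nflip k₀ x) = D * Xf x := by
    ext r a
    rw [hD, Matrix.diagonal_mul]
    simp only [Xf, Nflip, flipSet, Matrix.of_apply, Sum.elim_inl]
    by_cases h : r = k₀ <;> simp [h]
  have hWf : Wf (Nflip k₀ x) = Wf x * D := by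
    ext r c
    rw [hD, Matrix.mul_diagonal]
    simp only [Wf, Nflip, flipSet, Matrix.of_apply, Sum.elim_inr, Sum.elim_inl]
    by_cases h : c = k₀ <;> simp [h, mul_comm]
  have hεf : εf (Nflip k₀ x) = εf x := by
    ext r a
    simp [εf, Nflip, flipSet]
  have halg := alg σ (Xf x) (Wf x) (εf x) D (by rw [hDt]; exact hDD) (by rw [hDt]; exact hDD)
  have hYf : Yf (Nflip k₀ x) = Yf x := by
    rw [Yf, hXf, hWf, hεf, show Wf x * D = Wf x * Dᵀ by rw [hDt]]
    exact halg.1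
  constructor
  · intro i
    funext r
    rw [hXf, hYf, ← Matrix.mulVec_mulVec, Matrix.mulVec_diagonal]
  · rw [Hf, hXf, hYf]
    have h2 : Yf x * (D * Xf x)ᵀ * (D * Xf x * (D * Xf x)ᵀ + σ ^ 2 • 1)⁻¹
        = Yf x * (Xf x)ᵀ * (Xf x * (Xf x)ᵀ + σ ^ 2 • 1)⁻¹ * Dᵀ := halg.2
    rw [h2, hDt, Hf]

lemma g1_flip (i k l : Fin d) (hkl : k ≠ l) (x : E d n) :
    g1 i k l (Nflip k x) = - g1 i k l x := by
  obtain ⟨h1, -⟩ := flip_core 1 k x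
  rw [g1, h1 i, g1]
  simp only [if_pos rfl, if_neg (Ne.symm hkl), if_true]
  ring

lemma g2_flip (σ : ℝ) (i k l : Fin d) (hkl : k ≠ l) (x : E d n) :
    g2 σ i k l (Nflip k x) = - g2 σ i k l x := by
  obtain ⟨h1, h2⟩ := flip_core σ k x
  rw [g2, h1 i, h2, g2, Matrix.mul_diagonal]
  simp only [if_pos rfl, if_neg (Ne.symm hkl), if_true]
  ring

/-! ### The column-permutation transformation -/

def Tperm (τ : Equiv.Perm (Fin d)) (x : E d n) : E d n := fun j =>
  match j with
  | .inl (r, a) => x (.inl (τ r, a))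
  | .inr (.inl (r, c)) => x (.inr (.inl (r, τ c)))
  | .inr (.inr q) => x (.inr (.inr q))

def permEquiv (d n : ℕ) (τ : Equiv.Perm (Fin d)) :
    ((Fin d × Fin n) ⊕ ((Fin d × Fin d) ⊕ (Fin d × Fin n))) ≃
    ((Fin d × Fin n) ⊕ ((Fin d × Fin d) ⊕ (Fin d × Fin n))) :=
  Equiv.sumCongr (Equiv.prodCongr τ (Equiv.refl (Fin n)))
    (Equiv.sumCongr (Equiv.prodCongr (Equiv.refl (Fin d)) τ) (Equiv.refl _))

lemma Tperm_eq (τ : Equiv.Perm (Fin d)) (x : E d n) :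
    (fun j => x (permEquiv d n τ j)) = Tperm τ x :=
  funext fun j => by rcases j with ⟨r, a⟩ | ⟨r, c⟩ | q <;> rfl

lemma perm_core (σ : ℝ) (τ : Equiv.Perm (Fin d)) (hτ : τ.symm = τ) (x : E d n) :
    (∀ i, Xf (Tperm τ x) *ᵥ Yf (Tperm τ x) i = fun r => (Xf x *ᵥ Yf x i) (τ r)) ∧
    (∀ i l, Hf σ (Tperm τ x) i l = Hf σ x i (τ l)) := by
  set P : Matrix (Fin d) (Fin d) ℝ := τ.toPEquiv.toMatrix with hP
  obtain ⟨hPt, hPP⟩ := permMatrix_orth τ hτ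
  have hXf : Xf (Tperm τ x) = P * Xf x := by
    rw [hP, PEquiv.toMatrix_toPEquiv_mul]
    ext r a
    rfl
  have hWf : Wf (Tperm τ x) = Wf x * Pᵀ := by
    rw [hP, hPt, PEquiv.mul_toMatrix_toPEquiv, hτ]
    ext r c
    rfl
  have hεf : εf (Tperm τ x) = εf x := by ext r a; rfl
  have halg := alg σ (Xf x) (Wf x) (εf x) P (by rw [hPt]; exact hPP) (by rw [hPt]; exact hPP)
  have hYf : Yf (Tperm τ x) = Yf x := by
    rw [Yf, hXf, hWf, hεf]
    exact halg.1
  have hHf : Hf σ (Tperm τ x) = Hf σ x * P := by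
    rw [Hf, hXf, hYf]
    have h2 : Yf x * (P * Xf x)ᵀ * (P * Xf x * (P * Xf x)ᵀ + σ ^ 2 • 1)⁻¹
        = Yf x * (Xf x)ᵀ * (Xf x * (Xf x)ᵀ + σ ^ 2 • 1)⁻¹ * Pᵀ := halg.2
    rw [h2, hPt, Hf]
  refine ⟨fun i => ?_, fun i l => ?_⟩
  · funext r
    rw [hXf, hYf, ← Matrix.mulVec_mulVec, permMatrix_mulVec]
  · rw [hHf, hP, PEquiv.mul_toMatrix_toPEquiv, hτ]
    rfl

lemma g1_perm (τ : Equiv.Perm (Fin d)) (hτ : τ.symm = τ) (i k l : Fin d) (x : E d n) :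
    g1 i k l (Tperm τ x) = g1 i (τ k) (τ l) x := by
  obtain ⟨h1, -⟩ := perm_core 1 τ hτ x
  rw [g1, h1 i, g1]

lemma g2_perm (σ : ℝ) (τ : Equiv.Perm (Fin d)) (hτ : τ.symm = τ) (i k l : Fin d) (x : E d n) :
    g2 σ i k l (Tperm τ x) = g2 σ i (τ k) (τ l) x := by
  obtain ⟨h1, h2⟩ := perm_core σ τ hτ x
  rw [g2, h1 i, h2, g2]

/-! ### The row-permutation transformation -/

def Trow (τ : Equiv.Perm (Fin d)) (x : E d n) : E d n := fun j =>
  match j with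
  | .inl q => x (.inl q)
  | .inr (.inl (r, c)) => x (.inr (.inl (τ r, c)))
  | .inr (.inr (r, a)) => x (.inr (.inr (τ r, a)))

def rowEquiv (d n : ℕ) (τ : Equiv.Perm (Fin d)) :
    ((Fin d × Fin n) ⊕ ((Fin d × Fin d) ⊕ (Fin d × Fin n))) ≃
    ((Fin d × Fin n) ⊕ ((Fin d × Fin d) ⊕ (Fin d × Fin n))) :=
  Equiv.sumCongr (Equiv.refl _)
    (Equiv.sumCongr (Equiv.prodCongr τ (Equiv.refl _)) (Equiv.prodCongr τ (Equiv.refl _)))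

lemma Trow_eq (τ : Equiv.Perm (Fin d)) (x : E d n) :
    (fun j => x (rowEquiv d n τ j)) = Trow τ x :=
  funext fun j => by rcases j with ⟨r, a⟩ | ⟨r, c⟩ | q <;> rfl

lemma row_core (σ : ℝ) (τ : Equiv.Perm (Fin d)) (x : E d n) :
    (∀ i k, (Xf (Trow τ x) *ᵥ Yf (Trow τ x) i) k = (Xf x *ᵥ Yf x (τ i)) k) ∧
    (∀ i l, Hf σ (Trow τ x) i l = Hf σ x (τ i) l) := by
  have hXf : Xf (Trow τ x) = Xf x := by ext r a; rfl
  have hYrow : ∀ r a, Yf (Trow τ x) r a = Yf x (τ r) a := by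
    intro r a
    simp only [Yf, Matrix.add_apply, Matrix.mul_apply]
    rfl
  constructor
  · intro i k
    rw [hXf]
    simp only [Matrix.mulVec, dotProduct]
    exact Finset.sum_congr rfl fun a _ => by rw [hYrow]
  · intro i l
    rw [Hf, Hf, hXf]
    simp only [Matrix.mul_apply]
    exact Finset.sum_congr rfl fun c _ => by
      rw [Finset.sum_congr rfl fun a _ => by rw [hYrow i a]]

lemma g1_row (τ : Equiv.Perm (Fin d)) (i k l : Fin d) (x : E d n) :
    g1 i k l (Trow τ x) = g1 (τ i) k l x := by
  obtain ⟨h1, -⟩ := row_core 1 τ x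
  rw [g1, h1 i k, h1 i l, g1]

lemma g2_row (σ : ℝ) (τ : Equiv.Perm (Fin d)) (i k l : Fin d) (x : E d n) :
    g2 σ i k l (Trow τ x) = g2 σ (τ i) k l x := by
  obtain ⟨h1, h2⟩ := row_core σ τ x
  rw [g2, h1 i k, h2, g2]

/-- The family of marginal laws. -/
def μs (d n : ℕ) (σ : ℝ) :
    ((Fin d × Fin n) ⊕ ((Fin d × Fin d) ⊕ (Fin d × Fin n))) → Measure ℝ :=
  Sum.elim (fun _ => gaussianReal 0 1)
    (Sum.elim (fun _ => gaussianReal 0 1) fun _ => gaussianReal 0 ⟨σ ^ 2, sq_nonneg σ⟩)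

instance (σ : ℝ) (j) : IsProbabilityMeasure (μs d n σ j) := by
  rcases j with q | q | q <;> exact instIsProbabilityMeasureGaussianReal _ _

end Stmt4Aux

open Stmt4Aux in
/-- There exist scalars `t₁, t₂`, not depending on `i`, such that
for every `i`: `E[X (Yᵀ)_{:,i} Y_{i,:} Xᵀ] = t₁ I_d` and
`E[X (Yᵀ)_{:,i} (Ŵ_D)_{i,:}] = t₂ I_d`. -/
theorem stmt_4 (d n : ℕ) (hd : 1 ≤ d) (hn : 1 ≤ n) (σ : ℝ) (hσ : 0 < σ)
    (Ω : Type) [MeasureSpace Ω] [IsProbabilityMeasure (ℙ : Measure Ω)]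
    (X : Ω → Matrix (Fin d) (Fin n) ℝ)
    (W : Ω → Matrix (Fin d) (Fin d) ℝ)
    (ε : Ω → Matrix (Fin d) (Fin n) ℝ)
    (hmX : ∀ i j, Measurable fun ω => X ω i j)
    (hmW : ∀ i j, Measurable fun ω => W ω i j)
    (hmε : ∀ i j, Measurable fun ω => ε ω i j)
    (hindep : iIndepFun
      (Sum.elim (fun q : Fin d × Fin n => fun ω => X ω q.1 q.2)
        (Sum.elim (fun q : Fin d × Fin d => fun ω => W ω q.1 q.2)
          (fun q : Fin d × Fin n => fun ω => ε ω q.1 q.2))) ℙ)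
    (hlawX : ∀ i j, Measure.map (fun ω => X ω i j) ℙ = gaussianReal 0 1)
    (hlawW : ∀ i j, Measure.map (fun ω => W ω i j) ℙ = gaussianReal 0 1)
    (hlawε : ∀ i j, Measure.map (fun ω => ε ω i j) ℙ = gaussianReal 0 ⟨σ ^ 2, sq_nonneg σ⟩)
    (Y : Ω → Matrix (Fin d) (Fin n) ℝ) (hY : ∀ ω, Y ω = W ω * X ω + ε ω)
    (What : Ω → Matrix (Fin d) (Fin d) ℝ)
    (hWhat : ∀ ω, What ω =
      Y ω * (X ω)ᵀ * (X ω * (X ω)ᵀ + σ ^ 2 • (1 : Matrix (Fin d) (Fin d) ℝ))⁻¹)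
    :
    ∃ t₁ t₂ : ℝ, ∀ i : Fin d,
      (Matrix.of fun k l => ∫ ω, (X ω *ᵥ Y ω i) k * (X ω *ᵥ Y ω i) l)
          = t₁ • (1 : Matrix (Fin d) (Fin d) ℝ) ∧
      (Matrix.of fun k l => ∫ ω, (X ω *ᵥ Y ω i) k * What ω i l)
          = t₂ • (1 : Matrix (Fin d) (Fin d) ℝ) := by
  -- the family of coordinate random variables
  set G : ((Fin d × Fin n) ⊕ ((Fin d × Fin d) ⊕ (Fin d × Fin n))) → Ω → ℝ :=
    Sum.elim (fun q : Fin d × Fin n => fun ω => X ω q.1 q.2)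
      (Sum.elim (fun q : Fin d × Fin d => fun ω => W ω q.1 q.2)
        (fun q : Fin d × Fin n => fun ω => ε ω q.1 q.2)) with hGdef
  have hmG : ∀ j, Measurable (G j) := by
    rintro (⟨r, a⟩ | ⟨r, c⟩ | ⟨r, a⟩)
    exacts [hmX r a, hmW r c, hmε r a]
  have hlaw : ∀ j, Measure.map (G j) ℙ = μs d n σ j := by
    rintro (⟨r, a⟩ | ⟨r, c⟩ | ⟨r, a⟩)
    exacts [hlawX r a, hlawW r c, hlawε r a]
  have hmap : Measure.map (fun ω j => G j ω) ℙ = Measure.pi (μs d n σ) :=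
    map_eq_pi G hmG hindep (μs d n σ) hlaw
  set F : Ω → E d n := fun ω j => G j ω with hFdef
  have hFm : Measurable F := measurable_pi_lambda _ hmG
  -- identification of the reassembled matrices
  have hXF : ∀ ω, Xf (F ω) = X ω := fun ω => by ext r a; rfl
  have hWF : ∀ ω, Wf (F ω) = W ω := fun ω => by ext r c; rfl
  have hεF : ∀ ω, εf (F ω) = ε ω := fun ω => by ext r a; rfl
  have hYF : ∀ ω, Yf (F ω) = Y ω := fun ω => by
    rw [Yf, hWF, hXF, hεF, ← hY]
  have hHF : ∀ ω, Hf σ (F ω) = What ω := fun ω => by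
    rw [Hf, hYF, hXF, ← hWhat]
  -- transfer of integrals to the product space
  have keyg : ∀ g : E d n → ℝ, Measurable g →
      (∫ ω, g (F ω)) = ∫ x, g x ∂(Measure.pi (μs d n σ)) := by
    intro g hg
    rw [← hmap]
    exact (integral_map hFm.aemeasurable hg.aestronglyMeasurable).symm
  have key1 : ∀ i k l : Fin d, (∫ ω, (X ω *ᵥ Y ω i) k * (X ω *ᵥ Y ω i) l)
      = ∫ x, g1 i k l x ∂(Measure.pi (μs d n σ)) := by
    intro i k l
    rw [← keyg (g1 i k l) (measurable_g1 i k l)]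
    congr 1
    funext ω
    rw [g1, hXF, hYF]
  have key2 : ∀ i k l : Fin d, (∫ ω, (X ω *ᵥ Y ω i) k * What ω i l)
      = ∫ x, g2 σ i k l x ∂(Measure.pi (μs d n σ)) := by
    intro i k l
    rw [← keyg (g2 σ i k l) (measurable_g2 σ i k l)]
    congr 1
    funext ω
    rw [g2, hXF, hYF, hHF]
  -- symmetry of the marginals
  have hsym : ∀ j, (μs d n σ j).map (fun y => -y) = μs d n σ j := by
    rintro (q | q | q) <;> exact gaussian_neg _
  -- off-diagonal entries vanish
  have off1 : ∀ i k l : Fin d, k ≠ l → (∫ x, g1 i k l x ∂(Measure.pi (μs d n σ))) = 0 := by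
    intro i k l hkl
    have h := integral_flip (μs d n σ) hsym (flipSet d n k) (g1 i k l) (measurable_g1 i k l)
    have h2 : (fun x : E d n => g1 i k l fun j => if flipSet d n k j then -x j else x j)
        = fun x => - g1 i k l x := funext fun x => g1_flip i k l hkl x
    rw [show (∫ x, g1 i k l (fun j => if flipSet d n k j then -x j else x j)
        ∂(Measure.pi (μs d n σ))) = ∫ x, - g1 i k l x ∂(Measure.pi (μs d n σ)) from by
      rw [h2], integral_neg] at h
    linarith
  have off2 : ∀ i k l : Fin d, k ≠ l → (∫ x, g2 σ i k l x ∂(Measure.pi (μs d n σ))) = 0 := by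
    intro i k l hkl
    have h := integral_flip (μs d n σ) hsym (flipSet d n k) (g2 σ i k l) (measurable_g2 σ i k l)
    have h2 : (fun x : E d n => g2 σ i k l fun j => if flipSet d n k j then -x j else x j)
        = fun x => - g2 σ i k l x := funext fun x => g2_flip σ i k l hkl x
    rw [show (∫ x, g2 σ i k l (fun j => if flipSet d n k j then -x j else x j)
        ∂(Measure.pi (μs d n σ))) = ∫ x, - g2 σ i k l x ∂(Measure.pi (μs d n σ)) from by
      rw [h2], integral_neg] at h
    linarith
  -- invariance under the index permutations
  have hrowμ : ∀ (τ : Equiv.Perm (Fin d)) j, μs d n σ (rowEquiv d n τ j) = μs d n σ j := by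
    rintro τ (q | q | q) <;> rfl
  have hpermμ : ∀ (τ : Equiv.Perm (Fin d)) j, μs d n σ (permEquiv d n τ j) = μs d n σ j := by
    rintro τ (q | q | q) <;> rfl
  have row1 : ∀ (τ : Equiv.Perm (Fin d)) (i k l : Fin d),
      (∫ x, g1 (τ i) k l x ∂(Measure.pi (μs d n σ)))
        = ∫ x, g1 i k l x ∂(Measure.pi (μs d n σ)) := by
    intro τ i k l
    have h := integral_perm (μs d n σ) (rowEquiv d n τ) (hrowμ τ) (g1 i k l)
      (measurable_g1 i k l)
    have heq : (fun x : E d n => g1 i k l fun j => x (rowEquiv d n τ j))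
        = fun x => g1 (τ i) k l x := by
      funext x; rw [Trow_eq τ x, g1_row]
    rw [heq] at h
    exact h
  have row2 : ∀ (τ : Equiv.Perm (Fin d)) (i k l : Fin d),
      (∫ x, g2 σ (τ i) k l x ∂(Measure.pi (μs d n σ)))
        = ∫ x, g2 σ i k l x ∂(Measure.pi (μs d n σ)) := by
    intro τ i k l
    have h := integral_perm (μs d n σ) (rowEquiv d n τ) (hrowμ τ) (g2 σ i k l)
      (measurable_g2 σ i k l)
    have heq : (fun x : E d n => g2 σ i k l fun j => x (rowEquiv d n τ j))
        = fun x => g2 σ (τ i) k l x := by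
      funext x; rw [Trow_eq τ x, g2_row]
    rw [heq] at h
    exact h
  have perm1 : ∀ (τ : Equiv.Perm (Fin d)) (hτ : τ.symm = τ) (i k l : Fin d),
      (∫ x, g1 i (τ k) (τ l) x ∂(Measure.pi (μs d n σ)))
        = ∫ x, g1 i k l x ∂(Measure.pi (μs d n σ)) := by
    intro τ hτ i k l
    have h := integral_perm (μs d n σ) (permEquiv d n τ) (hpermμ τ) (g1 i k l)
      (measurable_g1 i k l)
    rw [show (∫ x, g1 i k l (fun j => x (permEquiv d n τ j)) ∂(Measure.pi (μs d n σ)))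
        = ∫ x, g1 i (τ k) (τ l) x ∂(Measure.pi (μs d n σ)) from by
      congr 1; funext x; rw [Tperm_eq τ x, g1_perm τ hτ]] at h
    exact h
  have perm2 : ∀ (τ : Equiv.Perm (Fin d)) (hτ : τ.symm = τ) (i k l : Fin d),
      (∫ x, g2 σ i (τ k) (τ l) x ∂(Measure.pi (μs d n σ)))
        = ∫ x, g2 σ i k l x ∂(Measure.pi (μs d n σ)) := by
    intro τ hτ i k l
    have h := integral_perm (μs d n σ) (permEquiv d n τ) (hpermμ τ) (g2 σ i k l)
      (measurable_g2 σ i k l)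
    rw [show (∫ x, g2 σ i k l (fun j => x (permEquiv d n τ j)) ∂(Measure.pi (μs d n σ)))
        = ∫ x, g2 σ i (τ k) (τ l) x ∂(Measure.pi (μs d n σ)) from by
      congr 1; funext x; rw [Tperm_eq τ x, g2_perm σ τ hτ]] at h
    exact h
  -- the common diagonal values
  set i0 : Fin d := ⟨0, hd⟩ with hi0
  refine ⟨∫ x, g1 i0 i0 i0 x ∂(Measure.pi (μs d n σ)),
    ∫ x, g2 σ i0 i0 i0 x ∂(Measure.pi (μs d n σ)), fun i => ?_⟩
  have diag1 : ∀ i k : Fin d, (∫ x, g1 i k k x ∂(Measure.pi (μs d n σ)))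
      = ∫ x, g1 i0 i0 i0 x ∂(Measure.pi (μs d n σ)) := by
    intro i k
    have s1 : (∫ x, g1 i k k x ∂(Measure.pi (μs d n σ)))
        = ∫ x, g1 i0 k k x ∂(Measure.pi (μs d n σ)) := by
      have := row1 (Equiv.swap i0 i) i0 k k
      rw [Equiv.swap_apply_left] at this
      exact this
    have s2 : (∫ x, g1 i0 k k x ∂(Measure.pi (μs d n σ)))
        = ∫ x, g1 i0 i0 i0 x ∂(Measure.pi (μs d n σ)) := by
      have := perm1 (Equiv.swap k i0) (Equiv.symm_swap k i0) i0 k k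
      rw [Equiv.swap_apply_left] at this
      exact this.symm
    rw [s1, s2]
  have diag2 : ∀ i k : Fin d, (∫ x, g2 σ i k k x ∂(Measure.pi (μs d n σ)))
      = ∫ x, g2 σ i0 i0 i0 x ∂(Measure.pi (μs d n σ)) := by
    intro i k
    have s1 : (∫ x, g2 σ i k k x ∂(Measure.pi (μs d n σ)))
        = ∫ x, g2 σ i0 k k x ∂(Measure.pi (μs d n σ)) := by
      have := row2 (Equiv.swap i0 i) i0 k k
      rw [Equiv.swap_apply_left] at this
      exact this
    have s2 : (∫ x, g2 σ i0 k k x ∂(Measure.pi (μs d n σ)))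
        = ∫ x, g2 σ i0 i0 i0 x ∂(Measure.pi (μs d n σ)) := by
      have := perm2 (Equiv.swap k i0) (Equiv.symm_swap k i0) i0 k k
      rw [Equiv.swap_apply_left] at this
      exact this.symm
    rw [s1, s2]
  constructor
  · ext k l
    rw [Matrix.of_apply, key1 i k l, Matrix.smul_apply, Matrix.one_apply]
    rcases eq_or_ne k l with rfl | hkl
    · rw [if_pos rfl, smul_eq_mul, mul_one, diag1 i k]
    · rw [if_neg hkl, smul_eq_mul, mul_zero, off1 i k l hkl]
  · ext k l
    rw [Matrix.of_apply, key2 i k l, Matrix.smul_apply, Matrix.one_apply]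
    rcases eq_or_ne k l with rfl | hkl
    · rw [if_pos rfl, smul_eq_mul, mul_one, diag2 i k]
    · rw [if_neg hkl, smul_eq_mul, mul_zero, off2 i k l hkl]

end
end

section
/- For every 1 ≤ i ≤ d, E[λ_i X (Yᵀ)_{:,i} Y_{i,:} Xᵀ − X (Yᵀ)_{:,i} (Ŵ_D)_{i,:}] = 0 (the d×d zero matrix). -/
open MeasureTheory ProbabilityTheory Matrix
open scoped NNReal
noncomputable section
namespace Stmt5Aux

/-- Pushforward of an iid family onto the product measure. -/
lemma map_eq_pi {Ω ι : Type*} [Fintype ι] [MeasurableSpace Ω] {P : Measure Ω}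
    [IsProbabilityMeasure P] (f : ι → Ω → ℝ) (hf : ∀ i, Measurable (f i))
    (h : iIndepFun f P) (m : ι → Measure ℝ)
    [∀ i, IsProbabilityMeasure (m i)] (hm : ∀ i, P.map (f i) = m i) :
    P.map (fun ω i => f i ω) = Measure.pi m := by
  refine (Measure.pi_eq fun s hs => ?_).symm
  rw [Measure.map_apply (measurable_pi_iff.mpr hf) (MeasurableSet.univ_pi hs)]
  have hpre : (fun ω i => f i ω) ⁻¹' Set.pi Set.univ s = ⋂ i ∈ Finset.univ, f i ⁻¹' s i := by
    ext ω; simp [Set.mem_pi]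
  rw [hpre, h.measure_inter_preimage_eq_mul Finset.univ (fun i _ => hs i)]
  exact Finset.prod_congr rfl fun i _ => by rw [← hm i, Measure.map_apply (hf i) (hs i)]


variable (d n : ℕ)
abbrev Idx := (Fin d × Fin n) ⊕ ((Fin d × Fin d) ⊕ (Fin d × Fin n))
abbrev E := Idx d n → ℝ
variable {d n}
def cX (x : E d n) : Matrix (Fin d) (Fin n) ℝ := Matrix.of fun a b => x (Sum.inl (a, b))
def cW (x : E d n) : Matrix (Fin d) (Fin d) ℝ := Matrix.of fun a b => x (Sum.inr (Sum.inl (a, b)))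
def cE (x : E d n) : Matrix (Fin d) (Fin n) ℝ := Matrix.of fun a b => x (Sum.inr (Sum.inr (a, b)))
def cY (x : E d n) : Matrix (Fin d) (Fin n) ℝ := cW x * cX x + cE x
def cM (σ : ℝ) (x : E d n) : Matrix (Fin d) (Fin d) ℝ :=
  cX x * (cX x)ᵀ + σ ^ 2 • (1 : Matrix (Fin d) (Fin d) ℝ)
def cWh (σ : ℝ) (x : E d n) : Matrix (Fin d) (Fin d) ℝ := cY x * (cX x)ᵀ * (cM σ x)⁻¹
def cv (i : Fin d) (x : E d n) : Fin d → ℝ := cX x *ᵥ (cY x i)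

instance matMS (m n' : Type*) : MeasurableSpace (Matrix m n' ℝ) :=
  inferInstanceAs (MeasurableSpace (m → n' → ℝ))
instance matBS (m n' : Type*) [Fintype m] [Fintype n'] : BorelSpace (Matrix m n' ℝ) :=
  inferInstanceAs (BorelSpace (m → n' → ℝ))

lemma measurable_cX (a b) : Measurable fun x : E d n => cX x a b := measurable_pi_apply _
lemma measurable_cW (a b) : Measurable fun x : E d n => cW x a b := measurable_pi_apply _
lemma measurable_cE (a b) : Measurable fun x : E d n => cE x a b := measurable_pi_apply _

lemma measurable_cY (a b) : Measurable fun x : E d n => cY x a b := by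
  simp only [cY, Matrix.add_apply, Matrix.mul_apply]
  exact (Finset.measurable_sum _ fun j _ =>
    (measurable_cW a j).mul (measurable_cX j b)).add (measurable_cE a b)

lemma measurable_cM (σ : ℝ) (a b) : Measurable fun x : E d n => cM σ x a b := by
  simp only [cM, Matrix.add_apply, Matrix.mul_apply, Matrix.transpose_apply]
  exact (Finset.measurable_sum _ fun j _ =>
    (measurable_cX a j).mul (measurable_cX b j)).add measurable_const

lemma measurable_inv_cM (σ : ℝ) (a b) : Measurable fun x : E d n => (cM σ x)⁻¹ a b := by
  have hM : Measurable fun x : E d n => cM σ x :=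
    measurable_pi_lambda _ fun a => measurable_pi_lambda _ fun b => measurable_cM σ a b
  have hdet : Measurable fun x : E d n => (cM σ x).det :=
    (Continuous.matrix_det continuous_id).measurable.comp hM
  have hadj : Measurable fun x : E d n => (cM σ x).adjugate a b := by
    have : Continuous fun A : Matrix (Fin d) (Fin d) ℝ => A.adjugate a b :=
      ((continuous_apply b).comp (continuous_apply a)).comp
        (Continuous.matrix_adjugate continuous_id)
    exact this.measurable.comp hM
  have : (fun x : E d n => (cM σ x)⁻¹ a b)
      = fun x => (Ring.inverse (cM σ x).det) * (cM σ x).adjugate a b := by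
    funext x; rw [Matrix.inv_def]; simp [Matrix.smul_apply]
  rw [this]
  simp only [Ring.inverse_eq_inv']
  exact hdet.inv.mul hadj

lemma measurable_cWh (σ : ℝ) (a b) : Measurable fun x : E d n => cWh σ x a b := by
  simp only [cWh, Matrix.mul_apply, Matrix.transpose_apply]
  refine Finset.measurable_sum _ fun j _ => Measurable.mul ?_ (measurable_inv_cM σ j b)
  exact Finset.measurable_sum _ fun m _ => (measurable_cY a m).mul (measurable_cX j m)

lemma measurable_cv (i : Fin d) (a) : Measurable fun x : E d n => cv i x a := by
  simp only [cv, Matrix.mulVec, dotProduct]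
  exact Finset.measurable_sum _ fun j _ => (measurable_cX a j).mul (measurable_cY i j)



/-! ### swap -/

def eswap (τ : Fin d ≃ Fin d) : Idx d n ≃ Idx d n :=
  Equiv.sumCongr (Equiv.prodCongr τ (Equiv.refl _))
    (Equiv.sumCongr (Equiv.prodCongr (Equiv.refl _) τ) (Equiv.refl _))

variable (τ : Fin d ≃ Fin d) (x : E d n) (σ : ℝ)

lemma cX_swap : cX (x ∘ eswap τ) = (cX x).submatrix τ id := rfl
lemma cW_swap : cW (x ∘ eswap τ) = (cW x).submatrix id τ := rfl
lemma cE_swap : cE (x ∘ eswap τ) = cE x := rfl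

lemma cY_swap : cY (x ∘ eswap τ) = cY x := by
  unfold cY
  rw [cX_swap, cW_swap, cE_swap]
  congr 1
  have : ((cW x).submatrix id ⇑τ) * ((cX x).submatrix ⇑τ id)
      = (cW x * cX x).submatrix id id := Matrix.submatrix_mul_equiv _ _ _ _ _
  rw [this, Matrix.submatrix_id_id]

lemma cM_swap : cM σ (x ∘ eswap τ) = (cM σ x).submatrix τ τ := by
  unfold cM
  rw [cX_swap, Matrix.transpose_submatrix, Matrix.submatrix_add, Matrix.submatrix_smul]
  have h1 : ((cX x).submatrix ⇑τ ⇑(Equiv.refl (Fin n))) * ((cX x)ᵀ.submatrix ⇑(Equiv.refl (Fin n)) ⇑τ)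
      = (cX x * (cX x)ᵀ).submatrix ⇑τ ⇑τ := Matrix.submatrix_mul_equiv _ _ _ _ _
  have h2 : (1 : Matrix (Fin d) (Fin d) ℝ).submatrix ⇑τ ⇑τ = 1 := Matrix.submatrix_one_equiv τ
  simp only [Equiv.coe_refl] at h1
  rw [h1, ← h2]
  simp [Matrix.submatrix_smul]

lemma cWh_swap : cWh σ (x ∘ eswap τ) = (cWh σ x).submatrix id τ := by
  unfold cWh
  rw [cY_swap, cM_swap, cX_swap, Matrix.transpose_submatrix, Matrix.inv_submatrix_equiv]
  have h1 : (cY x) * ((cX x)ᵀ.submatrix id ⇑τ) = (cY x * (cX x)ᵀ).submatrix id ⇑τ := by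
    ext a b; simp [Matrix.mul_apply]
  rw [h1]
  have h2 : ((cY x * (cX x)ᵀ).submatrix id ⇑τ) * ((cM σ x)⁻¹.submatrix ⇑τ ⇑τ)
      = ((cY x * (cX x)ᵀ) * (cM σ x)⁻¹).submatrix id ⇑τ := Matrix.submatrix_mul_equiv _ _ _ _ _
  rw [h2]

lemma cv_swap (i : Fin d) (a : Fin d) : cv i (x ∘ eswap τ) a = cv i x (τ a) := by
  simp only [cv, cY_swap, cX_swap, Matrix.mulVec, dotProduct, Matrix.submatrix_apply]
  rfl

/-! ### flip -/

def sg (k a : Fin d) : ℝ := if a = k then -1 else 1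

lemma sg_mul_self (k a : Fin d) : sg k a * sg k a = 1 := by
  unfold sg; split <;> norm_num

def flipc (k : Fin d) : Idx d n → ℝ :=
  Sum.elim (fun q => sg k q.1) (Sum.elim (fun q => sg k q.2) fun _ => 1)

def flip (k : Fin d) (x : E d n) : E d n := fun idx => flipc k idx * x idx

def Dmat (k : Fin d) : Matrix (Fin d) (Fin d) ℝ := Matrix.diagonal (sg k)

lemma Dmat_mul_self (k : Fin d) : Dmat k * Dmat k = 1 := by
  rw [Dmat, Matrix.diagonal_mul_diagonal]
  have : (fun a => sg k a * sg k a) = fun _ => (1 : ℝ) := funext fun a => sg_mul_self k a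
  rw [this, Matrix.diagonal_one]

lemma Dmat_transpose (k : Fin d) : (Dmat k)ᵀ = Dmat k := Matrix.diagonal_transpose _

lemma cX_flip (k : Fin d) (x : E d n) : cX (flip k x) = Dmat k * cX x := by
  ext a b; simp [cX, flip, flipc, Dmat, Matrix.diagonal_mul]

lemma cW_flip (k : Fin d) (x : E d n) : cW (flip k x) = cW x * Dmat k := by
  ext a b; simp [cW, flip, flipc, Dmat, Matrix.mul_diagonal, mul_comm]

lemma cE_flip (k : Fin d) (x : E d n) : cE (flip k x) = cE x := by
  ext a b; simp [cE, flip, flipc]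

lemma cY_flip (k : Fin d) (x : E d n) : cY (flip k x) = cY x := by
  unfold cY
  rw [cX_flip, cW_flip, cE_flip]
  congr 1
  rw [Matrix.mul_assoc, ← Matrix.mul_assoc (Dmat k), Dmat_mul_self, Matrix.one_mul]

lemma cM_flip (σ : ℝ) (k : Fin d) (x : E d n) :
    cM σ (flip k x) = Dmat k * cM σ x * Dmat k := by
  unfold cM
  rw [cX_flip, Matrix.transpose_mul, Dmat_transpose]
  rw [Matrix.mul_add, Matrix.add_mul]
  congr 1
  · rw [Matrix.mul_assoc, Matrix.mul_assoc, Matrix.mul_assoc]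
  · rw [Matrix.mul_smul, Matrix.mul_one, Matrix.smul_mul, Dmat_mul_self]

lemma cWh_flip (σ : ℝ) (k : Fin d) (x : E d n) : cWh σ (flip k x) = cWh σ x * Dmat k := by
  unfold cWh
  rw [cY_flip, cM_flip, cX_flip, Matrix.transpose_mul, Dmat_transpose]
  have hDinv : (Dmat k)⁻¹ = Dmat k := Matrix.inv_eq_right_inv (Dmat_mul_self k)
  have hinv : (Dmat k * cM σ x * Dmat k)⁻¹ = Dmat k * (cM σ x)⁻¹ * Dmat k := by
    rw [Matrix.mul_inv_rev, Matrix.mul_inv_rev, hDinv, ← Matrix.mul_assoc]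
  rw [hinv]
  simp only [Matrix.mul_assoc]
  rw [← Matrix.mul_assoc (Dmat k) (Dmat k), Dmat_mul_self, Matrix.one_mul]

lemma cv_flip (i : Fin d) (k : Fin d) (x : E d n) (a : Fin d) :
    cv i (flip k x) a = sg k a * cv i x a := by
  have hy := cY_flip k x
  simp only [cv, Matrix.mulVec, dotProduct, cX_flip, hy]
  rw [Finset.mul_sum]
  refine Finset.sum_congr rfl fun b _ => ?_
  simp [Dmat, Matrix.diagonal_mul, mul_assoc]

lemma cWh_flip_apply (σ : ℝ) (i k a : Fin d) (x : E d n) :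
    cWh σ (flip k x) i a = sg k a * cWh σ x i a := by
  rw [cWh_flip]; simp [Dmat, Matrix.mul_diagonal, mul_comm]

/-! ### measures -/

def nuM (d n : ℕ) (σ : ℝ) : Idx d n → Measure ℝ :=
  Sum.elim (fun _ => gaussianReal 0 1)
    (Sum.elim (fun _ => gaussianReal 0 1) fun _ => gaussianReal 0 ⟨σ ^ 2, sq_nonneg σ⟩)

instance (d n : ℕ) (σ : ℝ) (i : Idx d n) : IsProbabilityMeasure (nuM d n σ i) := by
  rcases i with q | q | q <;> exact instIsProbabilityMeasureGaussianReal _ _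

lemma nuM_eswap (σ : ℝ) (τ : Fin d ≃ Fin d) (i : Idx d n) :
    nuM d n σ ((eswap τ).symm i) = nuM d n σ i := by
  rcases i with q | q | q <;> rfl

lemma measurePreserving_eswap (σ : ℝ) (τ : Fin d ≃ Fin d) :
    MeasurePreserving (fun x : E d n => x ∘ eswap τ)
      (Measure.pi (nuM d n σ)) (Measure.pi (nuM d n σ)) := by
  have h := measurePreserving_piCongrLeft (α := fun _ : Idx d n => ℝ) (μ := nuM d n σ)
    ((eswap τ).symm)
  have hpi : (Measure.pi fun i' => nuM d n σ ((eswap τ).symm i')) = Measure.pi (nuM d n σ) := by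
    congr 1; funext i; exact nuM_eswap σ τ i
  have hcoe : ⇑(MeasurableEquiv.piCongrLeft (fun _ : Idx d n => ℝ) ((eswap τ).symm))
      = fun x : E d n => x ∘ eswap τ := by
    funext x; funext i
    have h2 := Equiv.piCongrLeft_apply_apply (fun _ : Idx d n => ℝ) ((eswap τ).symm) x
      ((eswap τ) i)
    simp only [Equiv.symm_apply_apply] at h2
    rw [MeasurableEquiv.coe_piCongrLeft]
    exact h2
  rw [hpi, hcoe] at h
  exact h

lemma measurableEmbedding_eswap (τ : Fin d ≃ Fin d) :
    MeasurableEmbedding (fun x : E d n => x ∘ eswap τ) := by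
  have hcoe : ⇑(MeasurableEquiv.piCongrLeft (fun _ : Idx d n => ℝ) ((eswap τ).symm))
      = fun x : E d n => x ∘ eswap τ := by
    funext x; funext i
    have h2 := Equiv.piCongrLeft_apply_apply (fun _ : Idx d n => ℝ) ((eswap τ).symm) x
      ((eswap τ) i)
    simp only [Equiv.symm_apply_apply] at h2
    rw [MeasurableEquiv.coe_piCongrLeft]
    exact h2
  rw [← hcoe]
  exact (MeasurableEquiv.piCongrLeft (fun _ : Idx d n => ℝ) ((eswap τ).symm)).measurableEmbedding

lemma mp_const_mul {c : ℝ} (hc : c * c = 1) (v : ℝ≥0) :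
    MeasurePreserving (fun t => c * t) (gaussianReal 0 v) (gaussianReal 0 v) := by
  refine ⟨measurable_id.const_mul c, ?_⟩
  have h := gaussianReal_map_const_mul (μ := 0) (v := v) c
  have hv : (⟨c ^ 2, sq_nonneg c⟩ : ℝ≥0) = 1 := by
    ext; simp [sq, hc]
  rw [mul_zero, show NNReal.mk (c ^ 2) (sq_nonneg c) = 1 from hv, one_mul] at h
  exact h

lemma measurePreserving_flip (σ : ℝ) (k : Fin d) :
    MeasurePreserving (flip (n := n) k) (Measure.pi (nuM d n σ)) (Measure.pi (nuM d n σ)) := by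
  have h := measurePreserving_pi (nuM d n σ) (nuM d n σ)
    (f := fun i t => flipc k i * t) ?_
  · exact h
  · intro i
    rcases i with q | q | q
    · exact mp_const_mul (sg_mul_self k q.1) 1
    · exact mp_const_mul (sg_mul_self k q.2) 1
    · exact mp_const_mul (one_mul 1) _

lemma cWh_swap_apply (σ : ℝ) (τ : Fin d ≃ Fin d) (x : E d n) (i a : Fin d) :
    cWh σ (x ∘ eswap τ) i a = cWh σ x i (τ a) := by
  rw [cWh_swap]; rfl

lemma dot_sq (A : Matrix (Fin d) (Fin n) ℝ) (u : Fin n → ℝ) :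
    u ⬝ᵥ ((Aᵀ * A) *ᵥ u) = ∑ a, (A *ᵥ u) a * (A *ᵥ u) a := by
  rw [← Matrix.mulVec_mulVec, Matrix.dotProduct_mulVec, Matrix.vecMul_transpose]
  rfl

end Stmt5Aux

open Stmt5Aux

/-- For every `i`,
`E[λ_i X (Yᵀ)_{:,i} Y_{i,:} Xᵀ − X (Yᵀ)_{:,i} (Ŵ_D)_{i,:}] = 0`. -/
theorem stmt_5 (d n : ℕ) (hd : 1 ≤ d) (hn : 1 ≤ n) (σ : ℝ) (hσ : 0 < σ)
    (Ω : Type) [MeasureSpace Ω] [IsProbabilityMeasure (ℙ : Measure Ω)]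
    (X : Ω → Matrix (Fin d) (Fin n) ℝ)
    (W : Ω → Matrix (Fin d) (Fin d) ℝ)
    (ε : Ω → Matrix (Fin d) (Fin n) ℝ)
    (hmX : ∀ i j, Measurable fun ω => X ω i j)
    (hmW : ∀ i j, Measurable fun ω => W ω i j)
    (hmε : ∀ i j, Measurable fun ω => ε ω i j)
    (hindep : iIndepFun
      (Sum.elim (fun q : Fin d × Fin n => fun ω => X ω q.1 q.2)
        (Sum.elim (fun q : Fin d × Fin d => fun ω => W ω q.1 q.2)
          (fun q : Fin d × Fin n => fun ω => ε ω q.1 q.2))) ℙ)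
    (hlawX : ∀ i j, Measure.map (fun ω => X ω i j) ℙ = gaussianReal 0 1)
    (hlawW : ∀ i j, Measure.map (fun ω => W ω i j) ℙ = gaussianReal 0 1)
    (hlawε : ∀ i j, Measure.map (fun ω => ε ω i j) ℙ = gaussianReal 0 ⟨σ ^ 2, sq_nonneg σ⟩)
    (Y : Ω → Matrix (Fin d) (Fin n) ℝ) (hY : ∀ ω, Y ω = W ω * X ω + ε ω)
    (What : Ω → Matrix (Fin d) (Fin d) ℝ)
    (hWhat : ∀ ω, What ω =
      Y ω * (X ω)ᵀ * (X ω * (X ω)ᵀ + σ ^ 2 • (1 : Matrix (Fin d) (Fin d) ℝ))⁻¹)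
    (lam : Fin d → ℝ)
    (hden : ∀ i : Fin d, (∫ ω, Y ω i ⬝ᵥ (((X ω)ᵀ * X ω) *ᵥ Y ω i)) ≠ 0)
    (hlam : ∀ i : Fin d, lam i =
      (∫ ω, What ω i ⬝ᵥ (X ω *ᵥ Y ω i)) / (∫ ω, Y ω i ⬝ᵥ (((X ω)ᵀ * X ω) *ᵥ Y ω i)))
    :
    ∀ i : Fin d,
      (Matrix.of fun k l => ∫ ω,
          (lam i * ((X ω *ᵥ Y ω i) k * (X ω *ᵥ Y ω i) l)
            - (X ω *ᵥ Y ω i) k * What ω i l))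
        = (0 : Matrix (Fin d) (Fin d) ℝ) := by
  intro i
  classical
  set μp := Measure.pi (nuM d n σ) with hμp
  set F : Idx d n → Ω → ℝ :=
    (Sum.elim (fun q : Fin d × Fin n => fun ω => X ω q.1 q.2)
      (Sum.elim (fun q : Fin d × Fin d => fun ω => W ω q.1 q.2)
        (fun q : Fin d × Fin n => fun ω => ε ω q.1 q.2))) with hF
  set Φ : Ω → E d n := fun ω idx => F idx ω with hΦdef
  have hmF : ∀ idx, Measurable (F idx) := by
    rintro (q | q | q)
    exacts [hmX q.1 q.2, hmW q.1 q.2, hmε q.1 q.2]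
  have hlawF : ∀ idx, Measure.map (F idx) ℙ = nuM d n σ idx := by
    rintro (q | q | q)
    exacts [hlawX q.1 q.2, hlawW q.1 q.2, hlawε q.1 q.2]
  have hmap : Measure.map Φ ℙ = μp := map_eq_pi F hmF hindep _ hlawF
  have hΦm : Measurable Φ := measurable_pi_iff.mpr hmF
  have htrans : ∀ g : E d n → ℝ, Measurable g →
      ∫ x, g x ∂μp = ∫ ω, g (Φ ω) := by
    intro g hg
    rw [← hmap, integral_map hΦm.aemeasurable]
    rw [hmap]
    exact hg.aestronglyMeasurable
  -- reconstruction
  have hcY : ∀ ω, cY (Φ ω) = Y ω := fun ω => by rw [hY ω]; rfl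
  have hcv : ∀ ω, cv i (Φ ω) = X ω *ᵥ Y ω i := fun ω => by
    show X ω *ᵥ (cY (Φ ω) i) = _
    rw [hcY ω]
  have hcWh : ∀ ω, cWh σ (Φ ω) = What ω := fun ω => by
    show cY (Φ ω) * (X ω)ᵀ * (X ω * (X ω)ᵀ + σ ^ 2 • 1)⁻¹ = _
    rw [hcY ω, hWhat ω]
  have hmv : ∀ a, Measurable fun x : E d n => cv i x a := fun a => measurable_cv i a
  have hmWh : ∀ a, Measurable fun x : E d n => cWh σ x i a := fun a => measurable_cWh σ i a
  -- invariance helpers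
  have hswapI : ∀ (τ : Fin d ≃ Fin d) (g : E d n → ℝ), Measurable g →
      ∫ x, g (x ∘ eswap τ) ∂μp = ∫ x, g x ∂μp := by
    intro τ g hg
    have h := measurePreserving_eswap (d := d) (n := n) σ τ
    have h2 := integral_map (μ := μp) h.measurable.aemeasurable
      (f := g) (by rw [h.map_eq]; exact hg.aestronglyMeasurable)
    rw [h.map_eq] at h2
    exact h2.symm
  have hflipI : ∀ (k : Fin d) (g : E d n → ℝ), Measurable g →
      ∫ x, g (Stmt5Aux.flip k x) ∂μp = ∫ x, g x ∂μp := by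
    intro k g hg
    have h := measurePreserving_flip (d := d) (n := n) σ k
    have h2 := integral_map (μ := μp) h.measurable.aemeasurable
      (f := g) (by rw [h.map_eq]; exact hg.aestronglyMeasurable)
    rw [h.map_eq] at h2
    exact h2.symm
  -- denominator transfer
  have hDm : Measurable fun x : E d n => ∑ a, cv i x a * cv i x a :=
    Finset.measurable_sum _ fun a _ => (hmv a).mul (hmv a)
  have hDtrans : (∫ ω, Y ω i ⬝ᵥ (((X ω)ᵀ * X ω) *ᵥ Y ω i))
      = ∫ x, ∑ a, cv i x a * cv i x a ∂μp := by
    rw [htrans _ hDm]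
    congr 1; funext ω
    rw [dot_sq (X ω) (Y ω i), hcv ω]
  have hDne : (∫ x, ∑ a, cv i x a * cv i x a ∂μp) ≠ 0 := hDtrans ▸ hden i
  have hDint : Integrable (fun x => ∑ a, cv i x a * cv i x a) μp := by
    by_contra h; exact hDne (integral_undef h)
  have hv2int : ∀ a, Integrable (fun x => cv i x a * cv i x a) μp := by
    intro a
    refine hDint.mono' ((hmv a).mul (hmv a)).aestronglyMeasurable
      (Filter.Eventually.of_forall fun x => ?_)
    rw [Real.norm_eq_abs, abs_mul_self]
    exact Finset.single_le_sum (f := fun a => cv i x a * cv i x a)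
      (fun b _ => mul_self_nonneg _) (Finset.mem_univ a)
  -- numerator transfer
  have hNm : Measurable fun x : E d n => ∑ a, cv i x a * cWh σ x i a :=
    Finset.measurable_sum _ fun a _ => (hmv a).mul (hmWh a)
  have hNtrans : (∫ ω, What ω i ⬝ᵥ (X ω *ᵥ Y ω i))
      = ∫ x, ∑ a, cv i x a * cWh σ x i a ∂μp := by
    rw [htrans _ hNm]
    congr 1; funext ω
    rw [← hcv ω, ← hcWh ω]
    simp [dotProduct, mul_comm]
  have hlamD : lam i * (∫ x, ∑ a, cv i x a * cv i x a ∂μp)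
      = ∫ x, ∑ a, cv i x a * cWh σ x i a ∂μp := by
    rw [hlam i, hNtrans, hDtrans]
    exact div_mul_cancel₀ _ hDne
  -- the integrand on the canonical space
  have hGmeas : ∀ k l, Measurable (fun x : E d n =>
      lam i * (cv i x k * cv i x l) - cv i x k * cWh σ x i l) := fun k l =>
    (measurable_const.mul ((hmv k).mul (hmv l))).sub ((hmv k).mul (hmWh l))
  have hGoal : ∀ k l, (∫ ω, (lam i * ((X ω *ᵥ Y ω i) k * (X ω *ᵥ Y ω i) l)
        - (X ω *ᵥ Y ω i) k * What ω i l))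
      = ∫ x, (lam i * (cv i x k * cv i x l) - cv i x k * cWh σ x i l) ∂μp := by
    intro k l
    rw [htrans _ (hGmeas k l)]
    congr 1; funext ω
    rw [hcv ω, hcWh ω]
  ext k l
  simp only [Matrix.of_apply, Matrix.zero_apply]
  rw [hGoal k l]
  by_cases hkl : k = l
  · subst hkl
    by_cases hint : Integrable (fun x => cv i x k * cWh σ x i k) μp
    · -- symmetry among diagonal entries
      have a_eq : ∀ l', (∫ x, cv i x l' * cv i x l' ∂μp)
          = ∫ x, cv i x k * cv i x k ∂μp := by
        intro l'
        have h := hswapI (Equiv.swap k l') (fun x => cv i x k * cv i x k)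
          ((hmv k).mul (hmv k))
        simp only [cv_swap, Equiv.swap_apply_left] at h
        exact h
      have b_eq : ∀ l', (∫ x, cv i x l' * cWh σ x i l' ∂μp)
          = ∫ x, cv i x k * cWh σ x i k ∂μp := by
        intro l'
        have h := hswapI (Equiv.swap k l') (fun x => cv i x k * cWh σ x i k)
          ((hmv k).mul (hmWh k))
        simp only [cv_swap, cWh_swap_apply, Equiv.swap_apply_left] at h
        exact h
      have b_int : ∀ l', Integrable (fun x => cv i x l' * cWh σ x i l') μp := by
        intro l'
        have hemb := measurableEmbedding_eswap (d := d) (n := n) (Equiv.swap l' k)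
        have hmp := measurePreserving_eswap (d := d) (n := n) σ (Equiv.swap l' k)
        have hiff := hmp.integrable_comp_emb (g := fun x => cv i x l' * cWh σ x i l') hemb
        have hfun : ((fun x => cv i x l' * cWh σ x i l')
            ∘ (fun x : E d n => x ∘ eswap (Equiv.swap l' k)))
            = fun x => cv i x k * cWh σ x i k := by
          funext x
          simp [Function.comp, cv_swap, cWh_swap_apply, Equiv.swap_apply_left]
        rw [hfun] at hiff
        exact hiff.mp hint
      have hsplit : (∫ x, (lam i * (cv i x k * cv i x k) - cv i x k * cWh σ x i k) ∂μp)
          = lam i * (∫ x, cv i x k * cv i x k ∂μp) - ∫ x, cv i x k * cWh σ x i k ∂μp := by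
        rw [integral_sub ((hv2int k).const_mul _) hint, integral_const_mul _ _]
      have hsumA : (∫ x, ∑ a, cv i x a * cv i x a ∂μp)
          = (d : ℝ) * ∫ x, cv i x k * cv i x k ∂μp := by
        rw [integral_finset_sum _ (fun a _ => hv2int a),
          Finset.sum_congr rfl (fun a _ => a_eq a), Finset.sum_const, Finset.card_univ,
          Fintype.card_fin, nsmul_eq_mul]
      have hsumB : (∫ x, ∑ a, cv i x a * cWh σ x i a ∂μp)
          = (d : ℝ) * ∫ x, cv i x k * cWh σ x i k ∂μp := by
        rw [integral_finset_sum _ (fun a _ => b_int a),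
          Finset.sum_congr rfl (fun a _ => b_eq a), Finset.sum_const, Finset.card_univ,
          Fintype.card_fin, nsmul_eq_mul]
      rw [hsplit]
      have hd0 : (d : ℝ) ≠ 0 := Nat.cast_ne_zero.mpr (by omega)
      have hkey : (d : ℝ) * (lam i * (∫ x, cv i x k * cv i x k ∂μp)
          - ∫ x, cv i x k * cWh σ x i k ∂μp) = 0 := by
        rw [mul_sub, ← hsumB, ← hlamD, hsumA]
        ring
      rcases mul_eq_zero.mp hkey with h | h
      · exact absurd h hd0
      · exact h
    · -- non-integrable case: the whole integrand is non-integrable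
      have hni : ¬ Integrable
          (fun x => lam i * (cv i x k * cv i x k) - cv i x k * cWh σ x i k) μp := by
        intro h
        apply hint
        have h2 := ((hv2int k).const_mul (lam i)).sub h
        have heq : ((fun x : E d n => lam i * (cv i x k * cv i x k))
            - fun x : E d n => lam i * (cv i x k * cv i x k) - cv i x k * cWh σ x i k)
            = fun x : E d n => cv i x k * cWh σ x i k := by
          funext x; simp only [Pi.sub_apply]; ring
        rw [heq] at h2
        exact h2
      exact integral_undef hni
  · -- off-diagonal: sign flip symmetry
    have h := hflipI k (fun x => lam i * (cv i x k * cv i x l) - cv i x k * cWh σ x i l)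
      (hGmeas k l)
    have hlk : l ≠ k := Ne.symm hkl
    have hneg : ∀ x : E d n,
        (lam i * (cv i (Stmt5Aux.flip k x) k * cv i (Stmt5Aux.flip k x) l)
          - cv i (Stmt5Aux.flip k x) k * cWh σ (Stmt5Aux.flip k x) i l)
        = -(lam i * (cv i x k * cv i x l) - cv i x k * cWh σ x i l) := by
      intro x
      simp [cv_flip, cWh_flip_apply, sg, hlk]
      ring
    rw [integral_congr_ae (Filter.Eventually.of_forall hneg), integral_neg] at h
    linarith
end
end

section
/- Assume n > σ². Then for every 1 ≤ i ≤ d: E[(Ŵ_D)_{i,:} X (Yᵀ)_{:,i}] > 0 and E[Y_{i,:} Xᵀ X (Yᵀ)_{:,i}] > 0; consequently λ_i > 0 for all i, and Λ = diag(λ_1,…,λ_d) is invertible. -/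
open MeasureTheory ProbabilityTheory Matrix
open scoped NNReal

noncomputable section

section AuxiliaryLemmas

open Real
open scoped ENNReal

lemma aux_integrable_abs_rpow_mul_exp_neg_mul_sq {b : ℝ} (hb : 0 < b) {s : ℝ} (hs : 0 ≤ s) :
    Integrable fun x : ℝ => |x| ^ s * Real.exp (-b * x ^ 2) := by
  have hs' : (-1 : ℝ) < s := lt_of_lt_of_le neg_one_lt_zero hs
  have hIoi : IntegrableOn (fun x : ℝ => |x| ^ s * Real.exp (-b * x ^ 2)) (Set.Ioi 0) := by
    refine (integrableOn_rpow_mul_exp_neg_mul_sq hb hs').congr_fun ?_ measurableSet_Ioi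
    intro x hx
    dsimp only
    rw [abs_of_pos hx]
  rw [← integrableOn_univ, ← @Set.Iio_union_Ici _ _ (0 : ℝ), integrableOn_union,
    integrableOn_Ici_iff_integrableOn_Ioi]
  refine ⟨?_, hIoi⟩
  rw [← (Measure.measurePreserving_neg (volume : Measure ℝ)).integrableOn_comp_preimage
      (Homeomorph.neg ℝ).measurableEmbedding]
  simpa only [Function.comp_def, neg_sq, abs_neg, Set.neg_preimage, Set.neg_Iio, neg_zero]
    using hIoi

lemma aux_gaussian_integrable_abs_rpow (v : ℝ≥0) (hv : v ≠ 0) {s : ℝ} (hs : 0 ≤ s) :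
    Integrable (fun x : ℝ => |x| ^ s) (gaussianReal 0 v) := by
  rw [gaussianReal_of_var_ne_zero _ hv,
    integrable_withDensity_iff (measurable_gaussianPDF _ _)
      (ae_of_all _ fun x => ENNReal.ofReal_lt_top)]
  have hb : (0 : ℝ) < 1 / (2 * v) := by
    have : (0:ℝ) < v := by positivity
    positivity
  have h := (aux_integrable_abs_rpow_mul_exp_neg_mul_sq hb hs).const_mul
    ((Real.sqrt (2 * Real.pi * v))⁻¹)
  refine h.congr (ae_of_all _ fun x => ?_)
  dsimp only
  rw [gaussianPDF, ENNReal.toReal_ofReal (gaussianPDFReal_nonneg _ _ _), gaussianPDFReal]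
  have harg : -(x - 0) ^ 2 / (2 * (v:ℝ)) = -(1 / (2 * (v:ℝ))) * x ^ 2 := by ring
  rw [harg]
  ring

lemma aux_gaussian_memℒp {Ω : Type} [MeasureSpace Ω] {f : Ω → ℝ} (hf : Measurable f)
    {v : ℝ≥0} (hv : v ≠ 0) (hlaw : Measure.map f ℙ = gaussianReal 0 v)
    (p : ℝ≥0∞) (hp : p ≠ ∞) : MemLp f p ℙ := by
  by_cases hp0 : p = 0
  · rw [hp0, memLp_zero_iff_aestronglyMeasurable]
    exact hf.aestronglyMeasurable
  have h1 : MemLp id p (gaussianReal 0 v) := by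
    rw [← memLp_norm_rpow_iff aestronglyMeasurable_id hp0 hp, ENNReal.div_self hp0 hp,
      memLp_one_iff_integrable]
    simpa [Real.norm_eq_abs] using aux_gaussian_integrable_abs_rpow v hv
      (ENNReal.toReal_nonneg (a := p))
  rw [← hlaw] at h1
  exact (memLp_map_measure_iff aestronglyMeasurable_id hf.aemeasurable).mp h1

variable {Ω : Type} [MeasureSpace Ω]

def AllLp (f : Ω → ℝ) : Prop := ∀ p : ℝ≥0∞, p ≠ ∞ → MeasureTheory.MemLp f p ℙ

lemma AllLp.mul {f g : Ω → ℝ} (hf : AllLp f) (hg : AllLp g) :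
    AllLp (fun ω => f ω * g ω) := by
  intro p hp
  have h2p : (2 : ℝ≥0∞) * p ≠ ∞ := ENNReal.mul_ne_top ENNReal.ofNat_ne_top hp
  have hpq : 1 / p = 1 / (2 * p) + 1 / (2 * p) := by
    rw [ENNReal.div_add_div_same, one_add_one_eq_two,
      show (2:ℝ≥0∞) / (2 * p) = (2 * 1) / (2 * p) by rw [mul_one],
      ENNReal.mul_div_mul_left _ _ two_ne_zero ENNReal.ofNat_ne_top]
  exact (hg (2 * p) h2p).smul (hf (2 * p) h2p)
    (hpqr := ⟨by simpa only [one_div] using hpq.symm⟩)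

lemma AllLp.sum {κ : Type*} (s : Finset κ) (F : κ → Ω → ℝ) (h : ∀ k ∈ s, AllLp (F k)) :
    AllLp (fun ω => ∑ k ∈ s, F k ω) := by
  intro p hp
  have : (fun ω => ∑ k ∈ s, F k ω) = ∑ k ∈ s, F k := by
    funext ω; simp
  rw [this]
  exact memLp_finsetSum' s fun k hk => h k hk p hp

lemma AllLp.add {f g : Ω → ℝ} (hf : AllLp f) (hg : AllLp g) :
    AllLp (fun ω => f ω + g ω) := fun p hp => (hf p hp).add (hg p hp)

lemma AllLp.integrable {f : Ω → ℝ} (hf : AllLp f) : Integrable f ℙ :=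
  memLp_one_iff_integrable.mp (hf 1 ENNReal.one_ne_top)

-- ridge matrix is positive definite
lemma aux_posdef {d n : ℕ} (σ : ℝ) (hσ : 0 < σ) (M : Matrix (Fin d) (Fin n) ℝ) :
    (M * Mᵀ + σ ^ 2 • (1 : Matrix (Fin d) (Fin d) ℝ)).PosDef := by
  have h1 : (M * Mᵀ).PosSemidef := by
    simpa [Matrix.conjTranspose_eq_transpose_of_trivial] using
      Matrix.posSemidef_self_mul_conjTranspose M
  refine Matrix.PosDef.posSemidef_add h1 ?_
  rw [Matrix.smul_one_eq_diagonal]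
  exact Matrix.PosDef.diagonal fun _ => by positivity

-- quadratic form with the inverse ridge matrix: nonneg and bounded by σ⁻² ‖u‖²
lemma aux_quadratic_bound {d n : ℕ} (σ : ℝ) (hσ : 0 < σ) (M : Matrix (Fin d) (Fin n) ℝ)
    (u : Fin d → ℝ) :
    0 ≤ u ⬝ᵥ ((M * Mᵀ + σ ^ 2 • (1 : Matrix (Fin d) (Fin d) ℝ))⁻¹ *ᵥ u) ∧
    u ⬝ᵥ ((M * Mᵀ + σ ^ 2 • (1 : Matrix (Fin d) (Fin d) ℝ))⁻¹ *ᵥ u) ≤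
      (σ ^ 2)⁻¹ * (u ⬝ᵥ u) := by
  set A := M * Mᵀ + σ ^ 2 • (1 : Matrix (Fin d) (Fin d) ℝ) with hA
  have hApd := aux_posdef σ hσ M
  have hnn : 0 ≤ u ⬝ᵥ (A⁻¹ *ᵥ u) := by
    simpa using hApd.inv.posSemidef.dotProduct_mulVec_nonneg u
  refine ⟨hnn, ?_⟩
  set y := A⁻¹ *ᵥ u with hy
  have hAy : A *ᵥ y = u := by
    rw [hy, Matrix.mulVec_mulVec, Matrix.mul_nonsing_inv _ (isUnit_iff_ne_zero.mpr hApd.det_pos.ne'),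
      Matrix.one_mulVec]
  have hyy : 0 ≤ y ⬝ᵥ y := Finset.sum_nonneg fun k _ => mul_self_nonneg _
  have huu : 0 ≤ u ⬝ᵥ u := Finset.sum_nonneg fun k _ => mul_self_nonneg _
  have h1 : σ ^ 2 * (y ⬝ᵥ y) ≤ u ⬝ᵥ y := by
    have e1 : u ⬝ᵥ y = y ⬝ᵥ (A *ᵥ y) := by rw [← hAy]; exact dotProduct_comm _ _
    have e2 : y ⬝ᵥ (A *ᵥ y) = y ⬝ᵥ ((M * Mᵀ) *ᵥ y) + σ ^ 2 * (y ⬝ᵥ y) := by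
      rw [hA, Matrix.add_mulVec, dotProduct_add, Matrix.smul_mulVec,
        Matrix.one_mulVec, dotProduct_smul, smul_eq_mul]
    have e3 : 0 ≤ y ⬝ᵥ ((M * Mᵀ) *ᵥ y) := by
      have := (aux_posdef σ hσ M).posSemidef
      have h := (by
        simpa [Matrix.conjTranspose_eq_transpose_of_trivial] using
          Matrix.posSemidef_self_mul_conjTranspose M : (M * Mᵀ).PosSemidef).dotProduct_mulVec_nonneg y
      simpa using h
    rw [e1, e2]
    linarith
  have h2 : (u ⬝ᵥ y) ^ 2 ≤ (u ⬝ᵥ u) * (y ⬝ᵥ y) := by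
    have := Finset.sum_mul_sq_le_sq_mul_sq Finset.univ u y
    simpa [dotProduct, sq] using this
  have ht : u ⬝ᵥ y = u ⬝ᵥ (A⁻¹ *ᵥ u) := by rw [hy]
  rw [← ht] at hnn ⊢
  rcases eq_or_lt_of_le hnn with h0 | hpos
  · rw [← h0]; positivity
  · have hσ2 : (0:ℝ) < σ ^ 2 := by positivity
    rw [inv_mul_eq_div, le_div_iff₀ hσ2]
    nlinarith [mul_le_mul_of_nonneg_left h1 huu]
variable (d n : ℕ)

/-- index type of the configuration space -/
abbrev CfgI := (Fin d × Fin n) ⊕ ((Fin d × Fin d) ⊕ (Fin d × Fin n))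

def cfgX (p : CfgI d n → ℝ) : Matrix (Fin d) (Fin n) ℝ :=
  Matrix.of fun a b => p (Sum.inl (a, b))

def cfgW (p : CfgI d n → ℝ) : Matrix (Fin d) (Fin d) ℝ :=
  Matrix.of fun a b => p (Sum.inr (Sum.inl (a, b)))

def cfgE (p : CfgI d n → ℝ) : Matrix (Fin d) (Fin n) ℝ :=
  Matrix.of fun a b => p (Sum.inr (Sum.inr (a, b)))

def cfgU (i : Fin d) (p : CfgI d n → ℝ) : Fin d → ℝ :=
  cfgX d n p *ᵥ ((cfgW d n p * cfgX d n p + cfgE d n p) i)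

def cfgA (σ : ℝ) (p : CfgI d n → ℝ) : Matrix (Fin d) (Fin d) ℝ :=
  cfgX d n p * (cfgX d n p)ᵀ + σ ^ 2 • 1

def cfgGf (σ : ℝ) (i : Fin d) (p : CfgI d n → ℝ) : ℝ :=
  cfgU d n i p ⬝ᵥ ((cfgA d n σ p)⁻¹ *ᵥ cfgU d n i p)

def cfgGg (i : Fin d) (p : CfgI d n → ℝ) : ℝ :=
  cfgU d n i p ⬝ᵥ cfgU d n i p

lemma continuous_cfgX : Continuous (cfgX d n) :=
  continuous_matrix fun _ _ => continuous_apply _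

lemma continuous_cfgW : Continuous (cfgW d n) :=
  continuous_matrix fun _ _ => continuous_apply _

lemma continuous_cfgE : Continuous (cfgE d n) :=
  continuous_matrix fun _ _ => continuous_apply _

lemma continuous_cfgU (i : Fin d) : Continuous (cfgU d n i) := by
  refine (continuous_cfgX d n).matrix_mulVec (continuous_pi fun j => ?_)
  exact (((continuous_cfgW d n).matrix_mul (continuous_cfgX d n)).add
    (continuous_cfgE d n)).matrix_elem i j

lemma continuous_cfgA (σ : ℝ) : Continuous (cfgA d n σ) :=
  ((continuous_cfgX d n).matrix_mul (continuous_cfgX d n).matrix_transpose).add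
    continuous_const

lemma continuous_cfgAinv (σ : ℝ) (hσ : 0 < σ) : Continuous fun p => (cfgA d n σ p)⁻¹ := by
  rw [continuous_iff_continuousAt]
  intro p
  have hdet : (cfgA d n σ p).det ≠ 0 := (aux_posdef σ hσ (cfgX d n p)).det_pos.ne'
  have h1 : ContinuousAt Ring.inverse (cfgA d n σ p).det := by
    rw [Ring.inverse_eq_inv']
    exact continuousAt_inv₀ hdet
  exact (continuousAt_matrix_inv _ h1).comp (continuous_cfgA d n σ).continuousAt

lemma continuous_cfgGf (σ : ℝ) (hσ : 0 < σ) (i : Fin d) : Continuous (cfgGf d n σ i) :=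
  (continuous_cfgU d n i).dotProduct
    ((continuous_cfgAinv d n σ hσ).matrix_mulVec (continuous_cfgU d n i))

lemma continuous_cfgGg (i : Fin d) : Continuous (cfgGg d n i) :=
  (continuous_cfgU d n i).dotProduct (continuous_cfgU d n i)

def cfgP0 (i : Fin d) (j0 : Fin n) : CfgI d n → ℝ :=
  Sum.elim (fun q => if q.1 = i ∧ q.2 = j0 then 1 else 0)
    (Sum.elim (fun _ => 0) (fun q => if q.1 = i ∧ q.2 = j0 then 1 else 0))

lemma cfgU_p0 (i : Fin d) (j0 : Fin n) :
    cfgU d n i (cfgP0 d n i j0) = Pi.single i 1 := by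
  funext k
  simp only [cfgU, cfgX, cfgW, cfgE, cfgP0, Matrix.mulVec, dotProduct,
    Matrix.add_apply, Matrix.mul_apply, Matrix.of_apply, Sum.elim_inl, Sum.elim_inr,
    zero_mul, Finset.sum_const_zero, zero_add, true_and]
  rw [Finset.sum_eq_single j0]
  · by_cases hk : k = i <;> simp [hk, Pi.single_apply]
  · intro j _ hj
    simp [hj]
  · simp

lemma single_ne_zero' (i : Fin d) : (Pi.single i 1 : Fin d → ℝ) ≠ 0 := by
  intro h
  have := congrFun h i
  simp at this

lemma cfgGf_p0_pos (σ : ℝ) (hσ : 0 < σ) (i : Fin d) (j0 : Fin n) :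
    0 < cfgGf d n σ i (cfgP0 d n i j0) := by
  have h := (aux_posdef σ hσ (cfgX d n (cfgP0 d n i j0))).inv.dotProduct_mulVec_pos
    (single_ne_zero' d i)
  rw [cfgGf, cfgU_p0]
  simpa [cfgA] using h

lemma cfgGg_p0_pos (i : Fin d) (j0 : Fin n) :
    0 < cfgGg d n i (cfgP0 d n i j0) := by
  rw [cfgGg, cfgU_p0]
  have : (Pi.single i 1 : Fin d → ℝ) ⬝ᵥ Pi.single i 1 = 1 := by
    simp [dotProduct, Pi.single_apply]
  rw [this]
  norm_num

def cfgΦ {Ω : Type} (X : Ω → Matrix (Fin d) (Fin n) ℝ) (W : Ω → Matrix (Fin d) (Fin d) ℝ)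
    (ε : Ω → Matrix (Fin d) (Fin n) ℝ) (ω : Ω) : CfgI d n → ℝ :=
  fun k => Sum.elim (fun q : Fin d × Fin n => fun ω => X ω q.1 q.2)
    (Sum.elim (fun q : Fin d × Fin d => fun ω => W ω q.1 q.2)
      (fun q : Fin d × Fin n => fun ω => ε ω q.1 q.2)) k ω


end AuxiliaryLemmas

/-- Assume `n > σ²`.  Then for every `i`,
`E[(Ŵ_D)_{i,:} X (Yᵀ)_{:,i}] > 0` and `E[Y_{i,:} Xᵀ X (Yᵀ)_{:,i}] > 0`; consequently
`λ_i > 0` for all `i` and `Λ = diag(λ₁,…,λ_d)` is invertible. -/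
theorem stmt_12 (d n : ℕ) (hd : 1 ≤ d) (hn : 1 ≤ n) (σ : ℝ) (hσ : 0 < σ)
    (Ω : Type) [MeasureSpace Ω] [IsProbabilityMeasure (ℙ : Measure Ω)]
    (X : Ω → Matrix (Fin d) (Fin n) ℝ)
    (W : Ω → Matrix (Fin d) (Fin d) ℝ)
    (ε : Ω → Matrix (Fin d) (Fin n) ℝ)
    (hmX : ∀ i j, Measurable fun ω => X ω i j)
    (hmW : ∀ i j, Measurable fun ω => W ω i j)
    (hmε : ∀ i j, Measurable fun ω => ε ω i j)
    (hindep : iIndepFun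
      (Sum.elim (fun q : Fin d × Fin n => fun ω => X ω q.1 q.2)
        (Sum.elim (fun q : Fin d × Fin d => fun ω => W ω q.1 q.2)
          (fun q : Fin d × Fin n => fun ω => ε ω q.1 q.2))) ℙ)
    (hlawX : ∀ i j, Measure.map (fun ω => X ω i j) ℙ = gaussianReal 0 1)
    (hlawW : ∀ i j, Measure.map (fun ω => W ω i j) ℙ = gaussianReal 0 1)
    (hlawε : ∀ i j, Measure.map (fun ω => ε ω i j) ℙ = gaussianReal 0 ⟨σ ^ 2, sq_nonneg σ⟩)
    (Y : Ω → Matrix (Fin d) (Fin n) ℝ) (hY : ∀ ω, Y ω = W ω * X ω + ε ω)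
    (What : Ω → Matrix (Fin d) (Fin d) ℝ)
    (hWhat : ∀ ω, What ω =
      Y ω * (X ω)ᵀ * (X ω * (X ω)ᵀ + σ ^ 2 • (1 : Matrix (Fin d) (Fin d) ℝ))⁻¹)
    (hnσ : σ ^ 2 < (n : ℝ))
    (lam : Fin d → ℝ)
    (hlam : ∀ i : Fin d, lam i =
      (∫ ω, What ω i ⬝ᵥ (X ω *ᵥ Y ω i)) / (∫ ω, Y ω i ⬝ᵥ (((X ω)ᵀ * X ω) *ᵥ Y ω i))) :
    (∀ i : Fin d, 0 < ∫ ω, What ω i ⬝ᵥ (X ω *ᵥ Y ω i)) ∧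
    (∀ i : Fin d, 0 < ∫ ω, Y ω i ⬝ᵥ (((X ω)ᵀ * X ω) *ᵥ Y ω i)) ∧
    (∀ i : Fin d, 0 < lam i) ∧
    IsUnit (Matrix.diagonal lam) := by
  have hv2ne : (⟨σ ^ 2, sq_nonneg σ⟩ : ℝ≥0) ≠ 0 := by
    intro h
    have h2 : σ ^ 2 = 0 := congrArg NNReal.toReal h
    nlinarith
  -- measurability of Y entries
  have hmY : ∀ a b, Measurable fun ω => Y ω a b := by
    intro a b
    have he : (fun ω => Y ω a b) = fun ω => (∑ l, W ω a l * X ω l b) + ε ω a b := by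
      funext ω; rw [hY ω]; simp [Matrix.mul_apply, Matrix.add_apply]
    rw [he]
    exact (Finset.measurable_sum _ fun l _ => (hmW a l).mul (hmX l b)).add (hmε a b)
  -- Lp membership of all entries
  have hXLp : ∀ a b, AllLp fun ω => X ω a b := fun a b =>
    fun p hp => aux_gaussian_memℒp (hmX a b) one_ne_zero (hlawX a b) p hp
  have hWLp : ∀ a b, AllLp fun ω => W ω a b := fun a b =>
    fun p hp => aux_gaussian_memℒp (hmW a b) one_ne_zero (hlawW a b) p hp
  have hεLp : ∀ a b, AllLp fun ω => ε ω a b := fun a b =>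
    fun p hp => aux_gaussian_memℒp (hmε a b) hv2ne (hlawε a b) p hp
  have hYLp : ∀ a b, AllLp fun ω => Y ω a b := by
    intro a b
    have h := (AllLp.sum Finset.univ (fun l => fun ω => W ω a l * X ω l b)
        (fun l _ => (hWLp a l).mul (hXLp l b))).add (hεLp a b)
    have he : (fun ω => Y ω a b) = fun ω => (∑ l, W ω a l * X ω l b) + ε ω a b := by
      funext ω; rw [hY ω]; simp [Matrix.mul_apply, Matrix.add_apply]
    rw [he]
    exact h
  have key : ∀ i : Fin d,
      (0 < ∫ ω, What ω i ⬝ᵥ (X ω *ᵥ Y ω i)) ∧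
      (0 < ∫ ω, Y ω i ⬝ᵥ (((X ω)ᵀ * X ω) *ᵥ Y ω i)) := by
    intro i
    -- rewrite the two integrands
    have hg_eq : ∀ ω, Y ω i ⬝ᵥ (((X ω)ᵀ * X ω) *ᵥ Y ω i) = (X ω *ᵥ Y ω i) ⬝ᵥ (X ω *ᵥ Y ω i) := by
      intro ω
      rw [← Matrix.mulVec_mulVec, Matrix.dotProduct_mulVec, Matrix.vecMul_transpose]
    have hf_eq : ∀ ω, What ω i ⬝ᵥ (X ω *ᵥ Y ω i) = (X ω *ᵥ Y ω i) ⬝ᵥ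
        ((X ω * (X ω)ᵀ + σ ^ 2 • (1 : Matrix (Fin d) (Fin d) ℝ))⁻¹ *ᵥ (X ω *ᵥ Y ω i)) := by
      intro ω
      rw [hWhat ω, Matrix.mul_apply_eq_vecMul, Matrix.mul_apply_eq_vecMul,
        Matrix.vecMul_transpose, ← Matrix.dotProduct_mulVec]
    -- measurability of coordinates of u
    have hmu : ∀ k, Measurable fun ω => (X ω *ᵥ Y ω i) k := by
      intro k
      have he : (fun ω => (X ω *ᵥ Y ω i) k) = fun ω => ∑ j, X ω k j * Y ω i j := rfl
      rw [he]
      exact Finset.measurable_sum _ fun j _ => (hmX k j).mul (hmY i j)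
    -- integrability of the g-integrand
    have huLp : ∀ k, AllLp fun ω => (X ω *ᵥ Y ω i) k := by
      intro k
      exact AllLp.sum Finset.univ (fun j => fun ω => X ω k j * Y ω i j)
        (fun j _ => (hXLp k j).mul (hYLp i j))
    have hgint : Integrable (fun ω => (X ω *ᵥ Y ω i) ⬝ᵥ (X ω *ᵥ Y ω i)) ℙ := by
      exact AllLp.integrable <| AllLp.sum Finset.univ
        (fun k => fun ω => (X ω *ᵥ Y ω i) k * (X ω *ᵥ Y ω i) k)
        (fun k _ => (huLp k).mul (huLp k))
    -- configuration-space map and its measurability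
    have hfΦ : ∀ ω, cfgGf d n σ i (cfgΦ d n X W ε ω) = (X ω *ᵥ Y ω i) ⬝ᵥ
        ((X ω * (X ω)ᵀ + σ ^ 2 • (1 : Matrix (Fin d) (Fin d) ℝ))⁻¹ *ᵥ (X ω *ᵥ Y ω i)) := by
      intro ω
      rw [hY ω]
      rfl
    have hgΦ : ∀ ω, cfgGg d n i (cfgΦ d n X W ε ω) = (X ω *ᵥ Y ω i) ⬝ᵥ (X ω *ᵥ Y ω i) := by
      intro ω
      rw [hY ω]
      rfl
    have hΦmeas : Measurable (cfgΦ d n X W ε) := by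
      refine measurable_pi_lambda _ ?_
      rintro (⟨a, b⟩ | ⟨a, b⟩ | ⟨a, b⟩)
      · exact hmX a b
      · exact hmW a b
      · exact hmε a b
    -- measurability and integrability of the f-integrand
    have hmf : Measurable fun ω => (X ω *ᵥ Y ω i) ⬝ᵥ
        ((X ω * (X ω)ᵀ + σ ^ 2 • (1 : Matrix (Fin d) (Fin d) ℝ))⁻¹ *ᵥ (X ω *ᵥ Y ω i)) := by
      have he : (fun ω => (X ω *ᵥ Y ω i) ⬝ᵥ
          ((X ω * (X ω)ᵀ + σ ^ 2 • (1 : Matrix (Fin d) (Fin d) ℝ))⁻¹ *ᵥ (X ω *ᵥ Y ω i)))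
          = fun ω => cfgGf d n σ i (cfgΦ d n X W ε ω) := funext fun ω => (hfΦ ω).symm
      rw [he]
      exact (continuous_cfgGf d n σ hσ i).measurable.comp hΦmeas
    have hfint : Integrable (fun ω => (X ω *ᵥ Y ω i) ⬝ᵥ
        ((X ω * (X ω)ᵀ + σ ^ 2 • (1 : Matrix (Fin d) (Fin d) ℝ))⁻¹ *ᵥ (X ω *ᵥ Y ω i))) ℙ := by
      refine Integrable.mono (hgint.const_mul ((σ ^ 2)⁻¹)) hmf.aestronglyMeasurable
        (ae_of_all _ fun ω => ?_)
      have hq := aux_quadratic_bound σ hσ (X ω) (X ω *ᵥ Y ω i)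
      have huu : (0:ℝ) ≤ (X ω *ᵥ Y ω i) ⬝ᵥ (X ω *ᵥ Y ω i) :=
        Finset.sum_nonneg fun k _ => mul_self_nonneg _
      rw [Real.norm_eq_abs, Real.norm_eq_abs, abs_of_nonneg hq.1,
        abs_of_nonneg (mul_nonneg (by positivity) huu)]
      exact hq.2
    -- a ball in configuration space on which both integrands are positive
    obtain ⟨r, hr, hball⟩ := Metric.isOpen_iff.mp
      ((isOpen_lt continuous_const (continuous_cfgGf d n σ hσ i)).inter
        (isOpen_lt continuous_const (continuous_cfgGg d n i)))
      (cfgP0 d n i ⟨0, hn⟩)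
      ⟨cfgGf_p0_pos d n σ hσ i ⟨0, hn⟩, cfgGg_p0_pos d n i ⟨0, hn⟩⟩
    -- the ball has positive probability, by independence
    have hprod := hindep.measure_inter_preimage_eq_mul (S := Finset.univ)
      (sets := fun k => Metric.ball (cfgP0 d n i ⟨0, hn⟩ k) r) (fun k _ => measurableSet_ball)
    have hfactors : ∀ k, ℙ ((Sum.elim (fun q : Fin d × Fin n => fun ω => X ω q.1 q.2)
        (Sum.elim (fun q : Fin d × Fin d => fun ω => W ω q.1 q.2)
          (fun q : Fin d × Fin n => fun ω => ε ω q.1 q.2)) k) ⁻¹'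
          Metric.ball (cfgP0 d n i ⟨0, hn⟩ k) r) ≠ 0 := by
      rintro (⟨a, b⟩ | ⟨a, b⟩ | ⟨a, b⟩) h0
      · have hmap : Measure.map (fun ω => X ω a b) ℙ
            (Metric.ball (cfgP0 d n i ⟨0, hn⟩ (Sum.inl (a, b))) r) = 0 := by
          rw [Measure.map_apply (hmX a b) measurableSet_ball]
          exact h0
        rw [hlawX a b] at hmap
        exact (Metric.measure_ball_pos volume _ hr).ne'
          (gaussianReal_absolutelyContinuous' 0 one_ne_zero hmap)
      · have hmap : Measure.map (fun ω => W ω a b) ℙ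
            (Metric.ball (cfgP0 d n i ⟨0, hn⟩ (Sum.inr (Sum.inl (a, b)))) r) = 0 := by
          rw [Measure.map_apply (hmW a b) measurableSet_ball]
          exact h0
        rw [hlawW a b] at hmap
        exact (Metric.measure_ball_pos volume _ hr).ne'
          (gaussianReal_absolutelyContinuous' 0 one_ne_zero hmap)
      · have hmap : Measure.map (fun ω => ε ω a b) ℙ
            (Metric.ball (cfgP0 d n i ⟨0, hn⟩ (Sum.inr (Sum.inr (a, b)))) r) = 0 := by
          rw [Measure.map_apply (hmε a b) measurableSet_ball]
          exact h0
        rw [hlawε a b] at hmap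
        exact (Metric.measure_ball_pos volume _ hr).ne'
          (gaussianReal_absolutelyContinuous' 0 hv2ne hmap)
    have hSpos : 0 < ℙ (⋂ k ∈ Finset.univ, (Sum.elim (fun q : Fin d × Fin n => fun ω => X ω q.1 q.2)
        (Sum.elim (fun q : Fin d × Fin d => fun ω => W ω q.1 q.2)
          (fun q : Fin d × Fin n => fun ω => ε ω q.1 q.2)) k) ⁻¹'
          Metric.ball (cfgP0 d n i ⟨0, hn⟩ k) r) := by
      rw [pos_iff_ne_zero, hprod]
      exact Finset.prod_ne_zero_iff.mpr fun k _ => hfactors k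
    -- points of that event lie in the supports of both integrands
    have hmem : ∀ ω, ω ∈ (⋂ k ∈ Finset.univ,
        (Sum.elim (fun q : Fin d × Fin n => fun ω => X ω q.1 q.2)
        (Sum.elim (fun q : Fin d × Fin d => fun ω => W ω q.1 q.2)
          (fun q : Fin d × Fin n => fun ω => ε ω q.1 q.2)) k) ⁻¹'
          Metric.ball (cfgP0 d n i ⟨0, hn⟩ k) r) →
        0 < cfgGf d n σ i (cfgΦ d n X W ε ω) ∧ 0 < cfgGg d n i (cfgΦ d n X W ε ω) := by
      intro ω hω
      have hmemball : cfgΦ d n X W ε ω ∈ Metric.ball (cfgP0 d n i ⟨0, hn⟩) r := by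
        rw [ball_pi _ hr]
        refine Set.mem_univ_pi.mpr fun k => ?_
        exact Set.mem_iInter₂.mp hω k (Finset.mem_univ k)
      exact hball hmemball
    constructor
    · simp_rw [hf_eq]
      rw [integral_pos_iff_support_of_nonneg
        (fun ω => (aux_quadratic_bound σ hσ (X ω) (X ω *ᵥ Y ω i)).1) hfint]
      refine lt_of_lt_of_le hSpos (measure_mono fun ω hω => ?_)
      have h := (hmem ω hω).1
      rw [hfΦ ω] at h
      exact Function.mem_support.mpr h.ne'
    · simp_rw [hg_eq]
      have hgnn : (0 : Ω → ℝ) ≤ fun ω => (X ω *ᵥ Y ω i) ⬝ᵥ (X ω *ᵥ Y ω i) :=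
        fun ω => Finset.sum_nonneg fun k _ => mul_self_nonneg _
      rw [integral_pos_iff_support_of_nonneg hgnn hgint]
      refine lt_of_lt_of_le hSpos (measure_mono fun ω hω => ?_)
      have h := (hmem ω hω).2
      rw [hgΦ ω] at h
      exact Function.mem_support.mpr h.ne'

  refine ⟨fun i => (key i).1, fun i => (key i).2, fun i => ?_, ?_⟩
  · rw [hlam i]; exact div_pos (key i).1 (key i).2
  · rw [Matrix.isUnit_iff_isUnit_det, Matrix.det_diagonal]
    exact isUnit_iff_ne_zero.mpr (Finset.prod_pos fun i _ => by
      rw [hlam i]; exact div_pos (key i).1 (key i).2).ne'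
end
end
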